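/- arXiv:math/0301347 — 4 statements merged into one kernel-verified Lean document; each statement's English description precedes it below -/
import Mathlib

section
/- Let (C,e) be a Morita context, i.e. a ring C with an idempotent e, e' = 1-e, A = eCe, B = e'Ce', M = e'Ce, N = eCe', and let C̄ = C/CeC be the Morita defect. Applying e'C ⊗_C - ⊗_C Ce' to the exact sequence 0 → Ω_{C/A} → Ce ⊗_{eCe} eC → C → C̄ → 0 (where the middle map μ_e is induced by multiplication and Ω_{C/A} is its kernel) yields an exact sequence of B-bimodules 0 → Ω_{C/A} → M ⊗_A N → B → C̄ → 0, where the map M ⊗_A N → B is induced by multiplication in C. In particular C̄ ≅ B/((CeC) ∩ B), so the Morita defect C̄ is a homomorphic image of B isomorphic to the cokernel of the multiplication map M ⊗_A N → B; moreover the C-bimodule Ω_{C/A} is annihilated by e on both sides. -/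
open CategoryTheory MulOpposite

attribute [local instance] HasDerivedCategory.standard
attribute [local instance] CategoryTheory.hasExt_of_hasDerivedCategory

set_option maxHeartbeats 1000000
set_option synthInstance.maxHeartbeats 400000
set_option linter.unusedSectionVars false
set_option linter.unusedVariables false

noncomputable section
namespace MoritaHochschild

/-! ### Corners `pCq` of a ring with idempotents `p`, `q` -/

variable {C : Type} [Ring C]

instance factOneIdem : Fact (IsIdempotentElem (1 : C)) := ⟨IsIdempotentElem.one⟩

instance factOneSubIdem {e : C} [he : Fact (IsIdempotentElem e)] :
    Fact (IsIdempotentElem (1 - e)) := ⟨he.out.one_sub⟩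

/-- The subset `pCq` of a ring `C`; for idempotents `p`, `q` this is the
corresponding "corner" of `C`. -/
def Hand (p q : C) : Type := {x : C // p * x * q = x}

namespace Hand

variable {p q r : C}

def val (x : Hand p q) : C := x.1

lemma prop (x : Hand p q) : p * x.val * q = x.val := x.2

lemma val_injective : Function.Injective (val (p := p) (q := q)) :=
  fun _ _ h => Subtype.ext h

def mk (x : C) (h : p * x * q = x) : Hand p q := ⟨x, h⟩

instance : Zero (Hand p q) := ⟨⟨0, by simp⟩⟩
instance : Add (Hand p q) :=
  ⟨fun x y => ⟨x.val + y.val, by rw [mul_add, add_mul, x.prop, y.prop]⟩⟩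
instance : Neg (Hand p q) :=
  ⟨fun x => ⟨-x.val, by rw [mul_neg, neg_mul, x.prop]⟩⟩
instance : Sub (Hand p q) :=
  ⟨fun x y => ⟨x.val - y.val, by rw [mul_sub, sub_mul, x.prop, y.prop]⟩⟩
instance : SMul ℕ (Hand p q) :=
  ⟨fun n x => ⟨n • x.val, by rw [mul_smul_comm, smul_mul_assoc, x.prop]⟩⟩
instance : SMul ℤ (Hand p q) :=
  ⟨fun n x => ⟨n • x.val, by rw [mul_smul_comm, smul_mul_assoc, x.prop]⟩⟩

instance : AddCommGroup (Hand p q) :=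
  val_injective.addCommGroup val rfl (fun _ _ => rfl) (fun _ => rfl) (fun _ _ => rfl)
    (fun _ _ => rfl) (fun _ _ => rfl)

/-- `val` as an additive map. -/
def valHom : Hand p q →+ C where
  toFun := val
  map_zero' := rfl
  map_add' := fun _ _ => rfl

@[simp] lemma val_add (x y : Hand p q) : (x + y).val = x.val + y.val := rfl
@[simp] lemma val_zero : (0 : Hand p q).val = 0 := rfl

section Facts

variable [hp : Fact (IsIdempotentElem p)] [hq : Fact (IsIdempotentElem q)]
    [hr : Fact (IsIdempotentElem r)]

lemma left_absorb (x : Hand p q) : p * x.val = x.val := by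
  conv_lhs => rw [← x.prop]
  rw [← mul_assoc, ← mul_assoc, hp.out.eq]
  exact x.prop

lemma right_absorb (x : Hand p q) : x.val * q = x.val := by
  conv_lhs => rw [← x.prop]
  rw [mul_assoc, mul_assoc, hq.out.eq, ← mul_assoc]
  exact x.prop

/-- Multiplication `pCq × qCr → pCr`. -/
def hmul (x : Hand p q) (y : Hand q r) : Hand p r :=
  ⟨x.val * y.val, by
    rw [← mul_assoc, left_absorb x, mul_assoc, right_absorb y]⟩

@[simp] lemma val_hmul (x : Hand p q) (y : Hand q r) :
    (hmul x y).val = x.val * y.val := rfl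

/-- Compression of an element of `C` into the corner `pCq`. -/
def compress (p q : C) [hp : Fact (IsIdempotentElem p)] [hq : Fact (IsIdempotentElem q)]
    (x : C) : Hand p q :=
  ⟨p * x * q, by
    have h1 : p * (p * x * q) * q = (p * p) * x * (q * q) := by noncomm_ring
    rw [h1, hp.out.eq, hq.out.eq]⟩

@[simp] lemma val_compress (x : C) : (compress p q x).val = p * x * q := rfl

instance : Mul (Hand p p) := ⟨fun x y => hmul x y⟩

instance : One (Hand p p) := ⟨⟨p, by rw [hp.out.eq, hp.out.eq]⟩⟩

@[simp] lemma val_mul (x y : Hand p p) : (x * y).val = x.val * y.val := rfl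
@[simp] lemma val_one : (1 : Hand p p).val = p := rfl

/-- The corner `pCp` is a ring, with unit `p`. -/
instance ring : Ring (Hand p p) :=
  { (inferInstance : AddCommGroup (Hand p p)) with
    mul := (· * ·)
    left_distrib := fun x y z => Subtype.ext (mul_add x.val y.val z.val)
    right_distrib := fun x y z => Subtype.ext (add_mul x.val y.val z.val)
    zero_mul := fun x => Subtype.ext (zero_mul x.val)
    mul_zero := fun x => Subtype.ext (mul_zero x.val)
    mul_assoc := fun x y z => Subtype.ext (mul_assoc x.val y.val z.val)
    one := 1
    one_mul := fun x => Subtype.ext (left_absorb x)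
    mul_one := fun x => Subtype.ext (right_absorb x) }

/-- `pCq` is a left module over the corner ring `pCp`. -/
instance : Module (Hand p p) (Hand p q) where
  smul a x := hmul a x
  one_smul x := Subtype.ext (left_absorb x)
  mul_smul a b x := Subtype.ext (mul_assoc a.val b.val x.val)
  smul_zero a := Subtype.ext (mul_zero a.val)
  smul_add a x y := Subtype.ext (mul_add a.val x.val y.val)
  add_smul a b x := Subtype.ext (add_mul a.val b.val x.val)
  zero_smul x := Subtype.ext (zero_mul x.val)

/-- `pCq` is a right module over the corner ring `qCq`. -/
instance : Module (Hand q q)ᵐᵒᵖ (Hand p q) where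
  smul a x := hmul x a.unop
  one_smul x := Subtype.ext (right_absorb x)
  mul_smul a b x := Subtype.ext (mul_assoc x.val b.unop.val a.unop.val).symm
  smul_zero a := Subtype.ext (zero_mul a.unop.val)
  smul_add a x y := Subtype.ext (add_mul x.val y.val a.unop.val)
  add_smul a b x := Subtype.ext (mul_add x.val a.unop.val b.unop.val)
  zero_smul x := Subtype.ext (mul_zero x.val)

@[simp] lemma val_smul (a : Hand p p) (x : Hand p q) : (a • x).val = a.val * x.val := rfl

@[simp] lemma val_op_smul (a : (Hand q q)ᵐᵒᵖ) (x : Hand p q) :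
    (a • x).val = x.val * a.unop.val := rfl

/-- `pC = pC1` is a right module over `C` itself. -/
instance : Module Cᵐᵒᵖ (Hand p (1 : C)) where
  smul c x := ⟨x.val * c.unop, by rw [mul_one, ← mul_assoc, left_absorb x]⟩
  one_smul x := Subtype.ext (mul_one x.val)
  mul_smul a b x := Subtype.ext (mul_assoc x.val b.unop a.unop).symm
  smul_zero a := Subtype.ext (zero_mul a.unop)
  smul_add a x y := Subtype.ext (add_mul x.val y.val a.unop)
  add_smul a b x := Subtype.ext (mul_add x.val a.unop b.unop)
  zero_smul x := Subtype.ext (mul_zero x.val)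

@[simp] lemma val_op_smul' (c : Cᵐᵒᵖ) (x : Hand p (1 : C)) :
    (c • x).val = x.val * c.unop := rfl

/-- `Cq = 1Cq` is a left module over `C` itself. -/
instance : Module C (Hand (1 : C) q) where
  smul c x := ⟨c * x.val, by rw [one_mul, mul_assoc, right_absorb x]⟩
  one_smul x := Subtype.ext (one_mul x.val)
  mul_smul a b x := Subtype.ext (mul_assoc a b x.val)
  smul_zero a := Subtype.ext (mul_zero a)
  smul_add a x y := Subtype.ext (mul_add a x.val y.val)
  add_smul a b x := Subtype.ext (add_mul a b x.val)
  zero_smul x := Subtype.ext (zero_mul x.val)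

@[simp] lemma val_smul' (c : C) (x : Hand (1 : C) q) :
    (c • x).val = c * x.val := rfl

end Facts

end Hand
/-! ### The Morita defect `C̄ = C/CeC` -/

/-- The Morita defect: the quotient ring `C/CeC` of `C` by the two-sided ideal
generated by the idempotent `e`. -/
def CBar (e : C) : Type := (TwoSidedIdeal.span {e}).ringCon.Quotient

instance (e : C) : Ring (CBar e) :=
  inferInstanceAs (Ring (TwoSidedIdeal.span {e}).ringCon.Quotient)

/-- The quotient map `C → C/CeC`. -/
def cbarMk (e : C) : C →+* CBar e := RingCon.mk' _

lemma cbarMk_surjective (e : C) : Function.Surjective (cbarMk e) :=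
  fun x => Quotient.inductionOn' x (fun c => ⟨c, rfl⟩)

lemma cbarMk_eq_zero_iff (e : C) (x : C) :
    cbarMk e x = 0 ↔ x ∈ TwoSidedIdeal.span {e} := by
  have : (0 : CBar e) = cbarMk e 0 := rfl
  rw [this]
  constructor
  · intro h
    have h' := (RingCon.eq _).1 h
    simpa using (TwoSidedIdeal.rel_iff _ _ _).1 h'
  · intro h
    exact (RingCon.eq _).2 ((TwoSidedIdeal.rel_iff _ _ _).2 (by simpa using h))

/-- `C/CeC` as a right `C`-module. -/
noncomputable instance (e : C) : Module Cᵐᵒᵖ (CBar e) :=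
  Module.compHom (CBar e) (RingHom.op (cbarMk e))

lemma op_smul_cbar (e : C) (c : C) (x : CBar e) :
    (MulOpposite.op c) • x = x * cbarMk e c := rfl

/-- `C/CeC` as a left `C`-module. -/
noncomputable instance cbarLeftModule (e : C) : Module C (CBar e) :=
  Module.compHom (CBar e) (cbarMk e)

lemma smul_cbar (e : C) (c : C) (x : CBar e) :
    c • x = cbarMk e c * x := rfl
/-! ### Balanced tensor products over a (noncommutative) ring, via their universal property -/

/-- The biadditive pairing `φ : M × N → T` exhibits `T` as the balanced tensor product
`M ⊗_A N` of a right `A`-module `M` and a left `A`-module `N`. -/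
structure IsTensorProd (A : Type) [Ring A] (M N T : Type) [AddCommGroup M] [AddCommGroup N]
    [AddCommGroup T] [Module Aᵐᵒᵖ M] [Module A N] (φ : M →+ N →+ T) : Prop where
  balanced : ∀ (a : A) (m : M) (n : N), φ (MulOpposite.op a • m) n = φ m (a • n)
  generates : ∀ t : T, t ∈ AddSubgroup.closure {t : T | ∃ m n, t = φ m n}
  lift : ∀ (T' : Type) [AddCommGroup T'] (ψ : M →+ N →+ T'),
    (∀ (a : A) (m : M) (n : N), ψ (MulOpposite.op a • m) n = ψ m (a • n)) →
      ∃ g : T →+ T', ∀ m n, g (φ m n) = ψ m n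


/-- For a Morita context `(C, e)` with `e' = 1 - e`, `A = eCe`,
`B = e'Ce'`, `M = e'Ce`, `N = eCe'`: applying `e'C ⊗_C - ⊗_C Ce'` to the fundamental
exact sequence `0 → Ω_{C/A} → Ce ⊗_A eC → C → C̄ → 0` yields an exact sequence
`0 → Ω_{C/A} → M ⊗_A N → B → C̄ → 0`. In particular `C̄ ≅ B/((CeC) ∩ B)` is a homomorphic
image of `B`, isomorphic to the cokernel of the multiplication map `M ⊗_A N → B`, and the
`C`-bimodule `Ω_{C/A}` is annihilated by `e` on both sides.

Here the tensor products are given by their universal property (`IsTensorProd`), `μ` is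
the multiplication map `Ce ⊗_A eC → C` with kernel `Ω_{C/A}`, `f` is the multiplication
map `M ⊗_A N → B`, `j : M ⊗_A N → Ce ⊗_A eC` is induced by the inclusions, and `L`, `R`
are the left and right actions of `e` on `Ce ⊗_A eC`. -/
theorem fundamental_exact_sequence_of_morita_context
    (C : Type) [Ring C] (e : C) [Fact (IsIdempotentElem e)]
    -- M ⊗_A N
    (T : Type) [AddCommGroup T] (φ : Hand (1 - e) e →+ Hand e (1 - e) →+ T)
    (hT : IsTensorProd (Hand e e) (Hand (1 - e) e) (Hand e (1 - e)) T φ)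
    -- Ce ⊗_A eC
    (T₂ : Type) [AddCommGroup T₂] (φ₂ : Hand (1 : C) e →+ Hand e (1 : C) →+ T₂)
    (hT₂ : IsTensorProd (Hand e e) (Hand (1 : C) e) (Hand e (1 : C)) T₂ φ₂)
    -- μ_e : Ce ⊗_A eC → C, induced by multiplication
    (μ : T₂ →+ C) (hμ : ∀ x y, μ (φ₂ x y) = x.val * y.val)
    -- f : M ⊗_A N → B, induced by multiplication
    (f : T →+ Hand (1 - e) (1 - e)) (hf : ∀ m n, (f (φ m n)).val = m.val * n.val)
    -- j : M ⊗_A N → Ce ⊗_A eC, induced by the inclusions M ⊆ Ce, N ⊆ eC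
    (j : T →+ T₂) (hj : ∀ m n, j (φ m n) =
      φ₂ ⟨m.val, by rw [one_mul]; exact Hand.right_absorb m⟩
        ⟨n.val, by rw [mul_one]; exact Hand.left_absorb n⟩)
    -- the two-sided action of `e` on `Ce ⊗_A eC`
    (L : T₂ →+ T₂) (hL : ∀ x y, L (φ₂ x y) =
      φ₂ ⟨e * x.val, by rw [one_mul, mul_assoc, Hand.right_absorb x]⟩ y)
    (R : T₂ →+ T₂) (hR : ∀ x y, R (φ₂ x y) =
      φ₂ x ⟨y.val * e, by rw [mul_one, ← mul_assoc, Hand.left_absorb y]⟩) :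
    -- `C̄` is a homomorphic image of `B`
    Function.Surjective (fun b : Hand (1 - e) (1 - e) => cbarMk e b.val)
    -- exactness at `B`: the kernel of `B → C̄` is the image of `f`
    ∧ (∀ b : Hand (1 - e) (1 - e), cbarMk e b.val = 0 ↔ b ∈ AddMonoidHom.range f)
    -- exactness at `M ⊗_A N`: `j` identifies `ker f` with `Ω_{C/A} = ker μ`
    ∧ Function.Injective j
    ∧ AddSubgroup.map j (AddMonoidHom.ker f) = AddMonoidHom.ker μ
    -- `Ω_{C/A}` is annihilated by `e` on both sides
    ∧ (∀ t ∈ AddMonoidHom.ker μ, L t = 0 ∧ R t = 0) := by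
  classical
  -- notation and basic facts
  have he : IsIdempotentElem e := Fact.out
  have hee : e * e = e := he
  have hE1 : (1 - e) * e = 0 := by simp [sub_mul, hee]
  have h1E : e * (1 - e) = 0 := by simp [mul_sub, hee]
  have hEE : (1 - e) * (1 - e) = (1 - e) := by
    simp [sub_mul, mul_sub, hee]
  -- congruence helper for φ₂
  have hcong₂ : ∀ {x x' : Hand (1 : C) e} {y y' : Hand e (1 : C)},
      x.val = x'.val → y.val = y'.val → φ₂ x y = φ₂ x' y' := by
    intro x x' y y' h h'
    rw [Hand.val_injective h, Hand.val_injective h']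
  have hcong : ∀ {x x' : Hand (1 - e) e} {y y' : Hand e (1 - e)},
      x.val = x'.val → y.val = y'.val → φ x y = φ x' y' := by
    intro x x' y y' h h'
    rw [Hand.val_injective h, Hand.val_injective h']
  -- generator induction principles
  have ind₂ : ∀ (P : T₂ → Prop), P 0 → (∀ a b, P a → P b → P (a + b)) →
      (∀ a, P a → P (-a)) → (∀ x y, P (φ₂ x y)) → ∀ t, P t := by
    intro P h0 hadd hneg hgen t
    refine AddSubgroup.closure_induction (p := fun t _ => P t)
      (fun x hx => ?_) h0 (fun a b _ _ ha hb => hadd a b ha hb)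
      (fun a _ ha => hneg a ha) (hT₂.generates t)
    obtain ⟨m, n, rfl⟩ := hx
    exact hgen m n
  have indT : ∀ (P : T → Prop), P 0 → (∀ a b, P a → P b → P (a + b)) →
      (∀ a, P a → P (-a)) → (∀ x y, P (φ x y)) → ∀ t, P t := by
    intro P h0 hadd hneg hgen t
    refine AddSubgroup.closure_induction (p := fun t _ => P t)
      (fun x hx => ?_) h0 (fun a b _ _ ha hb => hadd a b ha hb)
      (fun a _ ha => hneg a ha) (hT.generates t)
    obtain ⟨m, n, rfl⟩ := hx
    exact hgen m n
  -- equality-of-homs helpers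
  have eq₂ : ∀ {X : Type} [inst : AddCommGroup X] (F G : T₂ →+ X),
      (∀ x y, F (φ₂ x y) = G (φ₂ x y)) → ∀ t, F t = G t := by
    intro X inst F G hgen t
    refine ind₂ (fun t => F t = G t) (by simp) (fun a b ha hb => by simp [ha, hb])
      (fun a ha => by simp [ha]) hgen t
  have eqT : ∀ {X : Type} [inst : AddCommGroup X] (F G : T →+ X),
      (∀ x y, F (φ x y) = G (φ x y)) → ∀ t, F t = G t := by
    intro X inst F G hgen t
    refine indT (fun t => F t = G t) (by simp) (fun a b ha hb => by simp [ha, hb])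
      (fun a ha => by simp [ha]) hgen t
  -- compression maps
  have pM : ∀ x : Hand (1 : C) e, (1 - e) * ((1 - e) * x.val) * e = (1 - e) * x.val := by
    intro x
    rw [← mul_assoc, hEE, mul_assoc, Hand.right_absorb x]
  have pN : ∀ y : Hand e (1 : C), e * (y.val * (1 - e)) * (1 - e) = y.val * (1 - e) := by
    intro y
    rw [mul_assoc, mul_assoc, hEE, ← mul_assoc, Hand.left_absorb y]
  let mM : Hand (1 : C) e →+ Hand (1 - e) e :=
    { toFun := fun x => ⟨(1 - e) * x.val, pM x⟩
      map_zero' := Subtype.ext (mul_zero (1 - e))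
      map_add' := fun a b => Subtype.ext (mul_add (1 - e) a.val b.val) }
  let mN : Hand e (1 : C) →+ Hand e (1 - e) :=
    { toFun := fun y => ⟨y.val * (1 - e), pN y⟩
      map_zero' := Subtype.ext (zero_mul (1 - e))
      map_add' := fun a b => Subtype.ext (add_mul a.val b.val (1 - e)) }
  -- the retraction π : T₂ → T
  have hψbal : ∀ (a : Hand e e) (x : Hand (1 : C) e) (y : Hand e (1 : C)),
      φ (mM (MulOpposite.op a • x)) (mN y) = φ (mM x) (mN (a • y)) := by
    intro a x y
    have h1 : mM (MulOpposite.op a • x) = MulOpposite.op a • mM x :=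
      Subtype.ext ((mul_assoc (1 - e) x.val a.val).symm)
    have h2 : mN (a • y) = a • mN y :=
      Subtype.ext (mul_assoc a.val y.val (1 - e))
    rw [h1, h2, hT.balanced]
  let ψ : Hand (1 : C) e →+ Hand e (1 : C) →+ T :=
    { toFun := fun x => (φ (mM x)).comp mN
      map_zero' := by ext y; simp
      map_add' := fun a b => by ext y; simp }
  obtain ⟨π, hπ⟩ := hT₂.lift T ψ (fun a x y => hψbal a x y)
  have hπ' : ∀ x y, π (φ₂ x y) = φ (mM x) (mN y) := hπ
  -- π ∘ j = id
  have hπj : ∀ t, π (j t) = t := by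
    refine eqT (π.comp j) (AddMonoidHom.id T) ?_
    intro m n
    simp only [AddMonoidHom.comp_apply, AddMonoidHom.id_apply, hj, hπ']
    refine (hπ' _ _).trans ?_
    refine hcong ?_ ?_
    · exact Hand.left_absorb m
    · exact Hand.right_absorb n
  have hjinj : Function.Injective j := by
    intro a b h
    rw [← hπj a, ← hπj b, h]
  -- μ ∘ j = val ∘ f
  have hμj : ∀ t, μ (j t) = (f t).val := by
    refine eqT (μ.comp j) (Hand.valHom.comp f) ?_
    intro m n
    simp only [AddMonoidHom.comp_apply, hj, hμ]
    refine (hμ _ _).trans ?_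
    show m.val * n.val = (f (φ m n)).val
    exact (hf m n).symm
  -- L = λC ∘ μ  and  R = ρC ∘ μ
  let eC : C →+ Hand e (1 : C) :=
    { toFun := fun c => ⟨e * c, by rw [mul_one, ← mul_assoc, hee]⟩
      map_zero' := Subtype.ext (mul_zero e)
      map_add' := fun a b => Subtype.ext (mul_add e a b) }
  let Ce : C →+ Hand (1 : C) e :=
    { toFun := fun c => ⟨c * e, by rw [one_mul, mul_assoc, hee]⟩
      map_zero' := Subtype.ext (zero_mul e)
      map_add' := fun a b => Subtype.ext (add_mul a b e) }
  let ε₁ : Hand (1 : C) e := ⟨e, by rw [one_mul, hee]⟩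
  let ε₂ : Hand e (1 : C) := ⟨e, by rw [mul_one, hee]⟩
  have hLμ : ∀ t, L t = φ₂ ε₁ (eC (μ t)) := by
    refine eq₂ L (((φ₂ ε₁).comp eC).comp μ) ?_
    intro x y
    simp only [AddMonoidHom.comp_apply, hμ]
    have hax : e * (e * x.val) * e = e * x.val := by
      rw [← mul_assoc, hee, mul_assoc, Hand.right_absorb x]
    set a : Hand e e := ⟨e * x.val, hax⟩ with hadef
    have key := hT₂.balanced a ε₁ y
    have h1 : L ((φ₂ x) y) = φ₂ (MulOpposite.op a • ε₁) y := by
      rw [hL x y]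
      refine hcong₂ ?_ rfl
      show e * x.val = ε₁.val * a.val
      show e * x.val = e * (e * x.val)
      rw [← mul_assoc, hee]
    rw [h1, key]
    refine hcong₂ rfl ?_
    show a.val * y.val = (eC (x.val * y.val)).val
    show (e * x.val) * y.val = e * (x.val * y.val)
    exact mul_assoc e x.val y.val
  have hRμ : ∀ t, R t = φ₂ (Ce (μ t)) ε₂ := by
    refine eq₂ R ((φ₂.comp Ce).flip ε₂ |>.comp μ) ?_
    intro x y
    simp only [AddMonoidHom.comp_apply, AddMonoidHom.flip_apply, hμ]
    have hay : e * (y.val * e) * e = y.val * e := by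
      rw [mul_assoc, mul_assoc, hee, ← mul_assoc, Hand.left_absorb y]
    set a : Hand e e := ⟨y.val * e, hay⟩ with hadef
    have key := hT₂.balanced a x ε₂
    have h2 : R ((φ₂ x) y) = φ₂ x (a • ε₂) := by
      rw [hR x y]
      refine hcong₂ rfl ?_
      show y.val * e = a.val * ε₂.val
      show y.val * e = (y.val * e) * e
      rw [mul_assoc, hee]
    rw [h2, ← key]
    refine hcong₂ ?_ rfl
    show (MulOpposite.op a • x).val = (Ce (x.val * y.val)).val
    show x.val * (y.val * e) = (x.val * y.val) * e
    exact (mul_assoc x.val y.val e).symm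
  -- the decomposition t = L t + R t - L (R t) + j (π t)
  have hdecomp : ∀ t : T₂, t = L t + R t - L (R t) + j (π t) := by
    refine eq₂ (AddMonoidHom.id T₂) (L + R - L.comp R + j.comp π) ?_
    intro x y
    simp only [AddMonoidHom.id_apply, AddMonoidHom.add_apply, AddMonoidHom.sub_apply,
      AddMonoidHom.comp_apply]
    -- split x and y into Peirce components
    set x₁ : Hand (1 : C) e := ⟨e * x.val, by rw [one_mul, mul_assoc, Hand.right_absorb x]⟩
    set x₂ : Hand (1 : C) e := ⟨(1 - e) * x.val, by rw [one_mul, mul_assoc, Hand.right_absorb x]⟩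
    set y₁ : Hand e (1 : C) := ⟨y.val * e, by rw [mul_one, ← mul_assoc, Hand.left_absorb y]⟩
    set y₂ : Hand e (1 : C) := ⟨y.val * (1 - e), by rw [mul_one, ← mul_assoc, Hand.left_absorb y]⟩
    have hx : x = x₁ + x₂ := by
      refine Subtype.ext ?_
      show x.val = e * x.val + (1 - e) * x.val
      rw [← add_mul]; simp
    have hy : y = y₁ + y₂ := by
      refine Subtype.ext ?_
      show y.val = y.val * e + y.val * (1 - e)
      rw [← mul_add]; simp
    have hLxy : L (φ₂ x y) = φ₂ x₁ y := (hL x y).trans (hcong₂ rfl rfl)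
    have hRxy : R (φ₂ x y) = φ₂ x y₁ := (hR x y).trans (hcong₂ rfl rfl)
    have hLRxy : L (φ₂ x y₁) = φ₂ x₁ y₁ := (hL x y₁).trans (hcong₂ rfl rfl)
    have hjπ : j (π (φ₂ x y)) = φ₂ x₂ y₂ := by
      rw [hπ', hj]
      exact hcong₂ rfl rfl
    rw [hRxy, hLxy, hLRxy, hjπ]
    have expand : ∀ (u₁ u₂ : Hand (1 : C) e) (v₁ v₂ : Hand e (1 : C)),
        φ₂ (u₁ + u₂) (v₁ + v₂) =
          φ₂ u₁ v₁ + φ₂ u₁ v₂ + φ₂ u₂ v₁ + φ₂ u₂ v₂ := by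
      intro u₁ u₂ v₁ v₂
      simp only [map_add, AddMonoidHom.add_apply]
      abel
    have hx1 : φ₂ x₁ y = φ₂ x₁ y₁ + φ₂ x₁ y₂ := by rw [hy, map_add]
    have hy1 : φ₂ x y₁ = φ₂ x₁ y₁ + φ₂ x₂ y₁ := by
      rw [hx, map_add, AddMonoidHom.add_apply]
    conv_lhs => rw [hx, hy, expand]
    rw [hx1, hy1]
    abel
  -- range μ is a two-sided ideal containing e, equal to span {e}
  have hμrange : ∀ c : C, (c ∈ AddMonoidHom.range μ) ↔ c ∈ TwoSidedIdeal.span {e} := by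
    have span_of : ∀ t, μ t ∈ TwoSidedIdeal.span {e} := by
      refine ind₂ (fun t => μ t ∈ TwoSidedIdeal.span {e}) (by simp)
        (fun a b ha hb => by show μ (a + b) ∈ _; rw [map_add]; exact add_mem ha hb)
        (fun a ha => by show μ (-a) ∈ _; rw [map_neg]; exact neg_mem ha) ?_
      intro x y
      rw [hμ]
      have : x.val * y.val = x.val * (e * y.val) := by rw [Hand.left_absorb y]
      rw [this, ← mul_assoc]
      exact TwoSidedIdeal.mul_mem_right _ _ _
        (TwoSidedIdeal.mul_mem_left _ _ _ (TwoSidedIdeal.subset_span rfl))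
    -- range μ is closed under left and right multiplication
    have closed : ∀ t : T₂, ∀ c : C,
        (∃ s, μ s = c * μ t) ∧ (∃ s, μ s = μ t * c) := by
      refine ind₂ (fun t => ∀ c : C, (∃ s, μ s = c * μ t) ∧ (∃ s, μ s = μ t * c)) ?_ ?_ ?_ ?_
      · intro c; exact ⟨⟨0, by simp⟩, ⟨0, by simp⟩⟩
      · intro a b ha hb c
        obtain ⟨⟨s₁, hs₁⟩, ⟨s₂, hs₂⟩⟩ := ha c
        obtain ⟨⟨s₃, hs₃⟩, ⟨s₄, hs₄⟩⟩ := hb c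
        exact ⟨⟨s₁ + s₃, by rw [map_add, map_add, hs₁, hs₃, mul_add]⟩,
          ⟨s₂ + s₄, by rw [map_add, map_add, hs₂, hs₄, add_mul]⟩⟩
      · intro a ha c
        obtain ⟨⟨s₁, hs₁⟩, ⟨s₂, hs₂⟩⟩ := ha c
        exact ⟨⟨-s₁, by rw [map_neg, map_neg, hs₁, mul_neg]⟩,
          ⟨-s₂, by rw [map_neg, map_neg, hs₂, neg_mul]⟩⟩
      · intro x y c
        constructor
        · refine ⟨φ₂ ⟨c * x.val, ?_⟩ y, ?_⟩
          · rw [one_mul, mul_assoc, Hand.right_absorb x]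
          · refine (hμ _ _).trans ?_
            rw [hμ]
            show (c * x.val) * y.val = c * (x.val * y.val)
            exact mul_assoc c x.val y.val
        · refine ⟨φ₂ x ⟨y.val * c, ?_⟩, ?_⟩
          · rw [mul_one, ← mul_assoc, Hand.left_absorb y]
          · refine (hμ _ _).trans ?_
            rw [hμ]
            show x.val * (y.val * c) = (x.val * y.val) * c
            exact (mul_assoc x.val y.val c).symm
    intro c
    constructor
    · rintro ⟨t, rfl⟩; exact span_of t
    · intro hc
      rw [TwoSidedIdeal.mem_span_iff] at hc
      have hcI := hc (TwoSidedIdeal.mk' (AddMonoidHom.range μ)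
        ⟨0, map_zero μ⟩
        (fun ⟨s, hs⟩ ⟨s', hs'⟩ => ⟨s + s', by rw [map_add, hs, hs']⟩)
        (fun ⟨s, hs⟩ => ⟨-s, by rw [map_neg, hs]⟩)
        (fun {u v} ⟨s, hs⟩ => by
          obtain ⟨s', hs'⟩ := (closed s u).1
          exact ⟨s', by rw [hs', hs]⟩)
        (fun {u v} ⟨s, hs⟩ => by
          obtain ⟨s', hs'⟩ := (closed s v).2
          exact ⟨s', by rw [hs', hs]⟩))
        (by
          intro z hz
          rw [Set.mem_singleton_iff] at hz
          subst hz
          rw [SetLike.mem_coe]; refine (TwoSidedIdeal.mem_mk' _ _ _ _ _ _ _).2 ?_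
          exact ⟨φ₂ ε₁ ε₂, by rw [hμ]; exact hee⟩)
      replace hcI := (TwoSidedIdeal.mem_mk' _ _ _ _ _ _ _).1 hcI
      exact hcI
  -- μ (j (π t)) = (1 - e) * μ t * (1 - e)
  have hμjπ : ∀ t, μ (j (π t)) = (1 - e) * (μ t * (1 - e)) := by
    have h0 := eq₂ ((μ.comp j).comp π)
      ((AddMonoidHom.mulLeft (1 - e)).comp ((AddMonoidHom.mulRight (1 - e)).comp μ)) (by
        intro x y
        simp only [AddMonoidHom.comp_apply, hπ', hj, hμ]
        refine (hμ _ _).trans ?_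
        show ((1 - e) * x.val) * (y.val * (1 - e)) = (1 - e) * (x.val * y.val * (1 - e))
        noncomm_ring)
    exact fun t => h0 t
  -- Now assemble the five statements
  refine ⟨?_, ?_, hjinj, ?_, ?_⟩
  · -- surjectivity of B → C̄
    intro x
    obtain ⟨c, rfl⟩ := cbarMk_surjective e x
    refine ⟨Hand.compress (1 - e) (1 - e) c, ?_⟩
    show cbarMk e ((1 - e) * c * (1 - e)) = cbarMk e c
    have hmem : c - (1 - e) * c * (1 - e) ∈ TwoSidedIdeal.span {e} := by
      rw [← hμrange]
      refine ⟨φ₂ ε₁ (eC c) + φ₂ (Ce ((1 - e) * c)) ε₂, ?_⟩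
      rw [map_add, hμ, hμ]
      show e * (e * c) + ((1 - e) * c * e) * e = c - (1 - e) * c * (1 - e)
      rw [← mul_assoc, hee, mul_assoc, hee]
      noncomm_ring
    have h0 := (cbarMk_eq_zero_iff e _).2 hmem
    rw [map_sub, sub_eq_zero] at h0
    exact h0.symm
  · -- exactness at B
    intro b
    constructor
    · intro hb
      rw [cbarMk_eq_zero_iff, ← hμrange] at hb
      obtain ⟨t, ht⟩ := hb
      refine ⟨π t, ?_⟩
      refine Hand.val_injective ?_
      rw [← hμj, hμjπ, ht, ← mul_assoc]
      exact b.prop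
    · rintro ⟨t, rfl⟩
      rw [cbarMk_eq_zero_iff, ← hμrange]
      exact ⟨j t, hμj t⟩
  · -- exactness at M ⊗ N
    ext t
    simp only [AddSubgroup.mem_map, AddMonoidHom.mem_ker]
    constructor
    · rintro ⟨s, hs, rfl⟩
      rw [hμj, hs, Hand.val_zero]
    · intro ht
      have hLt : L t = 0 := by rw [hLμ, ht, map_zero, map_zero]
      have hRt : R t = 0 := by
        rw [hRμ, ht, map_zero, AddMonoidHom.map_zero, AddMonoidHom.zero_apply]
      have htt : t = j (π t) := by
        conv_lhs => rw [hdecomp t]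
        rw [hLt, hRt, map_zero]
        abel
      refine ⟨π t, ?_, htt.symm⟩
      refine Hand.val_injective ?_
      rw [← hμj, ← htt, ht, Hand.val_zero]
  · -- Ω is annihilated by e on both sides
    intro t ht
    rw [AddMonoidHom.mem_ker] at ht
    exact ⟨by rw [hLμ, ht, map_zero, map_zero],
      by rw [hRμ, ht, map_zero, AddMonoidHom.map_zero, AddMonoidHom.zero_apply]⟩


end MoritaHochschild
end
end

section
/- Let (C,e) be a Morita context with A = eCe, B = e'Ce', M = e'Ce, N = eCe'. The following conditions are equivalent: (1) e is a Morita idempotent (i.e. CeC = C); (2) the multiplication map μ_e : Ce ⊗_{eCe} eC → C is an epimorphism of C-bimodules, and in that case it is an isomorphism; (3) the multiplication map f : N ⊗_A M = e'Ce ⊗_{eCe} eCe' → e'Ce' = B is an epimorphism of B-bimodules, and in that case it is an isomorphism. -/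
open CategoryTheory MulOpposite

attribute [local instance] HasDerivedCategory.standard
attribute [local instance] CategoryTheory.hasExt_of_hasDerivedCategory

set_option maxHeartbeats 1000000
set_option synthInstance.maxHeartbeats 400000
set_option linter.unusedSectionVars false
set_option linter.unusedVariables false

noncomputable section
namespace MoritaHochschild

/-! ### Corners `pCq` of a ring with idempotents `p`, `q` -/

variable {C : Type} [Ring C]

section AuxProof

variable {C : Type} [Ring C]

lemma Hand.val_neg {p q : C} (x : Hand p q) : (-x).val = -x.val := rfl

lemma Hand.val_sum {p q : C} {ι : Type} (s : Finset ι) (g : ι → Hand p q) :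
    (∑ i ∈ s, g i).val = ∑ i ∈ s, (g i).val :=
  map_sum Hand.valHom g s

lemma Hand.compress_add {p q : C} [Fact (IsIdempotentElem p)] [Fact (IsIdempotentElem q)]
    (a b : C) : Hand.compress p q (a + b) = Hand.compress p q a + Hand.compress p q b :=
  Hand.val_injective (by simp [mul_add, add_mul])

lemma subsingleton_cbar_iff (e : C) :
    Subsingleton (CBar e) ↔ (1 : C) ∈ TwoSidedIdeal.span {e} := by
  constructor
  · intro h
    rw [← cbarMk_eq_zero_iff]
    exact Subsingleton.elim _ _
  · intro h
    refine ⟨fun a b => ?_⟩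
    obtain ⟨x, rfl⟩ := cbarMk_surjective e a
    obtain ⟨y, rfl⟩ := cbarMk_surjective e b
    have hxy : cbarMk e (x - y) = 0 := by
      rw [cbarMk_eq_zero_iff]
      simpa using (TwoSidedIdeal.span {e}).mul_mem_left (x - y) 1 h
    rw [map_sub] at hxy
    exact sub_eq_zero.mp hxy

lemma exists_fin_rep (e : C) (h : (1 : C) ∈ TwoSidedIdeal.span {e}) :
    ∃ (k : ℕ) (x y : Fin k → C), (1 : C) = ∑ i, x i * e * y i := by
  let S : TwoSidedIdeal C := TwoSidedIdeal.mk'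
    {c | ∃ (k : ℕ) (x y : Fin k → C), c = ∑ i, x i * e * y i}
    ⟨0, ![], ![], by simp⟩
    (by
      intro a b ha hb
      obtain ⟨k, xs, ys, rfl⟩ := ha
      obtain ⟨l, xs', ys', rfl⟩ := hb
      refine ⟨k + l, Fin.append xs xs', Fin.append ys ys', ?_⟩
      rw [Fin.sum_univ_add]
      simp [Fin.append_left, Fin.append_right])
    (by
      intro a ha
      obtain ⟨k, xs, ys, rfl⟩ := ha
      exact ⟨k, fun i => -xs i, ys, by simp [neg_mul]⟩)
    (by
      intro c a ha
      obtain ⟨k, xs, ys, rfl⟩ := ha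
      refine ⟨k, fun i => c * xs i, ys, ?_⟩
      rw [Finset.mul_sum]
      exact Finset.sum_congr rfl fun i _ => by noncomm_ring)
    (by
      intro a c hc
      obtain ⟨k, xs, ys, rfl⟩ := hc
      refine ⟨k, xs, fun i => ys i * c, ?_⟩
      rw [Finset.sum_mul]
      exact Finset.sum_congr rfl fun i _ => by noncomm_ring)
  have he : e ∈ S := by
    refine (TwoSidedIdeal.mem_mk' _ _ _ _ _ _ e).mpr ?_
    exact ⟨1, fun _ => 1, fun _ => 1, by simp⟩
  have h1 : (1 : C) ∈ S :=
    TwoSidedIdeal.mem_span_iff.mp h S (by simpa using he)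
  exact (TwoSidedIdeal.mem_mk' _ _ _ _ _ _ 1).mp h1

lemma mul_val_mem_span (e : C) [Fact (IsIdempotentElem e)] {p r : C}
    [Fact (IsIdempotentElem p)] [Fact (IsIdempotentElem r)]
    (m : Hand p e) (n : Hand e r) : m.val * n.val ∈ TwoSidedIdeal.span {e} := by
  have he_mem : e ∈ TwoSidedIdeal.span ({e} : Set C) :=
    TwoSidedIdeal.mem_span_iff.mpr fun I hI => hI rfl
  have h : m.val * n.val = m.val * e * n.val := by
    rw [Hand.right_absorb m]
  rw [h]
  exact (TwoSidedIdeal.span {e}).mul_mem_right _ _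
    ((TwoSidedIdeal.span {e}).mul_mem_left _ _ he_mem)

end AuxProof

/-- For a Morita context `(C, e)`, the following are equivalent:
`e` is a Morita idempotent (`C̄ = C/CeC = 0`); the multiplication map
`μ_e : Ce ⊗_A eC → C` is surjective (and then bijective); the multiplication map
`f : e'Ce ⊗_A eCe' → e'Ce' = B` is surjective (and then bijective). -/
theorem morita_idempotent_via_multiplication_maps
    (C : Type) [Ring C] (e : C) [Fact (IsIdempotentElem e)]
    -- Ce ⊗_A eC
    (T₂ : Type) [AddCommGroup T₂] (φ₂ : Hand (1 : C) e →+ Hand e (1 : C) →+ T₂)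
    (hT₂ : IsTensorProd (Hand e e) (Hand (1 : C) e) (Hand e (1 : C)) T₂ φ₂)
    (μ : T₂ →+ C) (hμ : ∀ x y, μ (φ₂ x y) = x.val * y.val)
    -- e'Ce ⊗_A eCe'
    (T : Type) [AddCommGroup T] (φ : Hand (1 - e) e →+ Hand e (1 - e) →+ T)
    (hT : IsTensorProd (Hand e e) (Hand (1 - e) e) (Hand e (1 - e)) T φ)
    (f : T →+ Hand (1 - e) (1 - e)) (hf : ∀ m n, (f (φ m n)).val = m.val * n.val) :
    (Subsingleton (CBar e) ↔ Function.Surjective μ)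
    ∧ (Subsingleton (CBar e) → Function.Bijective μ)
    ∧ (Subsingleton (CBar e) ↔ Function.Surjective f)
    ∧ (Subsingleton (CBar e) → Function.Bijective f) := by
  have hee : e * e = e := (Fact.out : IsIdempotentElem e)
  have hsub := subsingleton_cbar_iff (e := e)
  -- surjectivity of μ implies `1 ∈ CeC`
  have backμ : Function.Surjective μ → (1 : C) ∈ TwoSidedIdeal.span {e} := by
    intro hs
    obtain ⟨t, ht⟩ := hs 1
    rw [← ht]
    refine AddSubgroup.closure_induction
      (p := fun z _ => μ z ∈ TwoSidedIdeal.span {e}) ?_ ?_ ?_ ?_ (hT₂.generates t)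
    · rintro z ⟨m, n, rfl⟩
      rw [hμ]
      exact mul_val_mem_span e m n
    · simp only [map_zero]; exact TwoSidedIdeal.zero_mem _
    · intro a b _ _ ha hb
      simp only [map_add]; exact TwoSidedIdeal.add_mem _ ha hb
    · intro a _ ha
      simp only [map_neg]; exact TwoSidedIdeal.neg_mem _ ha
  -- surjectivity of f implies `1 ∈ CeC`
  have backf : Function.Surjective f → (1 : C) ∈ TwoSidedIdeal.span {e} := by
    intro hs
    obtain ⟨t, ht⟩ := hs 1
    have h1 : (1 - e : C) ∈ TwoSidedIdeal.span {e} := by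
      have hv : (f t).val = 1 - e := by rw [ht, Hand.val_one]
      rw [← hv]
      refine AddSubgroup.closure_induction
        (p := fun z _ => (f z).val ∈ TwoSidedIdeal.span {e}) ?_ ?_ ?_ ?_ (hT.generates t)
      · rintro z ⟨m, n, rfl⟩
        rw [hf]
        exact mul_val_mem_span e m n
      · simp only [map_zero, Hand.val_zero]; exact TwoSidedIdeal.zero_mem _
      · intro a b _ _ ha hb
        simp only [map_add, Hand.val_add]; exact TwoSidedIdeal.add_mem _ ha hb
      · intro a _ ha
        simp only [map_neg, Hand.val_neg]; exact TwoSidedIdeal.neg_mem _ ha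
    have h2 : (1 : C) = e + (1 - e) := by noncomm_ring
    rw [h2]
    exact TwoSidedIdeal.add_mem _
      (TwoSidedIdeal.mem_span_iff.mpr fun I hI => hI rfl : e ∈ TwoSidedIdeal.span ({e} : Set C)) h1
  -- main construction: from `1 ∈ CeC` both maps are bijective
  have main : (1 : C) ∈ TwoSidedIdeal.span {e} →
      Function.Bijective μ ∧ Function.Bijective f := by
    intro hP
    obtain ⟨k, x, y, h1⟩ := exists_fin_rep e hP
    -- the inverse of μ
    let g₂ : C →+ T₂ := AddMonoidHom.mk'
      (fun c => ∑ i : Fin k, φ₂ (Hand.compress 1 e (c * x i)) (Hand.compress e 1 (y i)))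
      (fun a b => by
        rw [← Finset.sum_add_distrib]
        refine Finset.sum_congr rfl fun i _ => ?_
        rw [add_mul, Hand.compress_add, map_add, AddMonoidHom.add_apply])
    have hg₂def : ∀ c, g₂ c =
        ∑ i : Fin k, φ₂ (Hand.compress 1 e (c * x i)) (Hand.compress e 1 (y i)) :=
      fun c => rfl
    have hμg₂ : ∀ c, μ (g₂ c) = c := by
      intro c
      rw [hg₂def, map_sum]
      have hterm : ∀ i : Fin k,
          μ (φ₂ (Hand.compress 1 e (c * x i)) (Hand.compress e 1 (y i)))
            = c * (x i * e * y i) := by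
        intro i
        rw [hμ, Hand.val_compress, Hand.val_compress]
        calc (1 : C) * (c * x i) * e * (e * y i * 1)
            = c * (x i * (e * e) * y i) := by noncomm_ring
          _ = c * (x i * e * y i) := by rw [hee]
      rw [Finset.sum_congr rfl (fun i _ => hterm i), ← Finset.mul_sum, ← h1, mul_one]
    have hg₂μ : ∀ t, g₂ (μ t) = t := by
      intro t
      refine AddMonoidHom.eqOn_closure (f := g₂.comp μ) (g := AddMonoidHom.id T₂)
        (s := {t : T₂ | ∃ m n, t = φ₂ m n}) ?_ (hT₂.generates t)
      rintro z ⟨m, n, rfl⟩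
      show g₂ (μ (φ₂ m n)) = φ₂ m n
      rw [hμ, hg₂def]
      have key : ∀ i : Fin k, Hand.compress (1 : C) e (m.val * n.val * x i)
          = MulOpposite.op (Hand.compress e e (n.val * x i)) • m := by
        intro i
        apply Hand.val_injective
        show (1 : C) * (m.val * n.val * x i) * e = m.val * (e * (n.val * x i) * e)
        rw [show m.val * (e * (n.val * x i) * e)
            = (m.val * e) * (n.val * x i * e) by noncomm_ring, Hand.right_absorb m]
        noncomm_ring
      have hbal : ∀ i : Fin k,
          φ₂ (Hand.compress 1 e (m.val * n.val * x i)) (Hand.compress e 1 (y i))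
            = φ₂ m ((Hand.compress e e (n.val * x i)) • (Hand.compress e 1 (y i))) := by
        intro i
        rw [key i]
        exact hT₂.balanced _ _ _
      rw [Finset.sum_congr rfl (fun i _ => hbal i), ← map_sum (φ₂ m)]
      congr 1
      apply Hand.val_injective
      rw [Hand.val_sum]
      have hterm : ∀ i : Fin k,
          ((Hand.compress e e (n.val * x i)) • (Hand.compress e 1 (y i))).val
            = (e * n.val) * (x i * e * y i) := by
        intro i
        rw [Hand.val_smul, Hand.val_compress, Hand.val_compress]
        calc e * (n.val * x i) * e * (e * y i * 1)
            = (e * n.val) * (x i * (e * e) * y i) := by noncomm_ring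
          _ = (e * n.val) * (x i * e * y i) := by rw [hee]
      rw [Finset.sum_congr rfl (fun i _ => hterm i), ← Finset.mul_sum, ← h1, mul_one,
        Hand.left_absorb n]
    -- the inverse of f
    let g : Hand (1 - e) (1 - e) →+ T := AddMonoidHom.mk'
      (fun b => ∑ i : Fin k,
        φ (Hand.compress (1 - e) e (b.val * x i)) (Hand.compress e (1 - e) (y i)))
      (fun a b => by
        rw [← Finset.sum_add_distrib]
        refine Finset.sum_congr rfl fun i _ => ?_
        rw [Hand.val_add, add_mul, Hand.compress_add, map_add, AddMonoidHom.add_apply])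
    have hgdef : ∀ b, g b = ∑ i : Fin k,
        φ (Hand.compress (1 - e) e (b.val * x i)) (Hand.compress e (1 - e) (y i)) :=
      fun b => rfl
    have hfg : ∀ b, f (g b) = b := by
      intro b
      apply Hand.val_injective
      rw [hgdef, map_sum, Hand.val_sum]
      have hterm : ∀ i : Fin k,
          (f (φ (Hand.compress (1 - e) e (b.val * x i))
            (Hand.compress e (1 - e) (y i)))).val
            = ((1 - e) * b.val) * (x i * e * y i) * (1 - e) := by
        intro i
        rw [hf, Hand.val_compress, Hand.val_compress]
        calc (1 - e) * (b.val * x i) * e * (e * y i * (1 - e))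
            = ((1 - e) * b.val) * (x i * (e * e) * y i) * (1 - e) := by noncomm_ring
          _ = ((1 - e) * b.val) * (x i * e * y i) * (1 - e) := by rw [hee]
      rw [Finset.sum_congr rfl (fun i _ => hterm i)]
      rw [show (∑ i : Fin k, ((1 - e) * b.val) * (x i * e * y i) * (1 - e))
          = ((1 - e) * b.val) * (∑ i : Fin k, x i * e * y i) * (1 - e) by
        rw [Finset.mul_sum, Finset.sum_mul]]
      rw [← h1, mul_one, Hand.left_absorb b, Hand.right_absorb b]
    have hgf : ∀ t, g (f t) = t := by
      intro t
      refine AddMonoidHom.eqOn_closure (f := g.comp f) (g := AddMonoidHom.id T)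
        (s := {t : T | ∃ m n, t = φ m n}) ?_ (hT.generates t)
      rintro z ⟨m, n, rfl⟩
      show g (f (φ m n)) = φ m n
      rw [hgdef]
      have key : ∀ i : Fin k, Hand.compress (1 - e) e ((f (φ m n)).val * x i)
          = MulOpposite.op (Hand.compress e e (n.val * x i)) • m := by
        intro i
        apply Hand.val_injective
        show (1 - e) * ((f (φ m n)).val * x i) * e = m.val * (e * (n.val * x i) * e)
        rw [hf m n]
        rw [show m.val * (e * (n.val * x i) * e)
            = (m.val * e) * (n.val * x i * e) by noncomm_ring, Hand.right_absorb m]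
        rw [show (1 - e) * (m.val * n.val * x i) * e
            = ((1 - e) * m.val) * (n.val * x i * e) by noncomm_ring, Hand.left_absorb m]
      have hbal : ∀ i : Fin k,
          φ (Hand.compress (1 - e) e ((f (φ m n)).val * x i)) (Hand.compress e (1 - e) (y i))
            = φ m ((Hand.compress e e (n.val * x i)) • (Hand.compress e (1 - e) (y i))) := by
        intro i
        rw [key i]
        exact hT.balanced _ _ _
      rw [Finset.sum_congr rfl (fun i _ => hbal i), ← map_sum (φ m)]
      congr 1
      apply Hand.val_injective
      rw [Hand.val_sum]
      have hterm : ∀ i : Fin k,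
          ((Hand.compress e e (n.val * x i)) • (Hand.compress e (1 - e) (y i))).val
            = (e * n.val) * (x i * e * y i) * (1 - e) := by
        intro i
        rw [Hand.val_smul, Hand.val_compress, Hand.val_compress]
        calc e * (n.val * x i) * e * (e * y i * (1 - e))
            = (e * n.val) * (x i * (e * e) * y i) * (1 - e) := by noncomm_ring
          _ = (e * n.val) * (x i * e * y i) * (1 - e) := by rw [hee]
      rw [Finset.sum_congr rfl (fun i _ => hterm i)]
      rw [show (∑ i : Fin k, (e * n.val) * (x i * e * y i) * (1 - e))
          = (e * n.val) * (∑ i : Fin k, x i * e * y i) * (1 - e) by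
        rw [Finset.mul_sum, Finset.sum_mul]]
      rw [← h1, mul_one, Hand.left_absorb n, Hand.right_absorb n]
    exact ⟨⟨fun t t' h => by rw [← hg₂μ t, h, hg₂μ], fun c => ⟨g₂ c, hμg₂ c⟩⟩,
      ⟨fun t t' h => by rw [← hgf t, h, hgf], fun b => ⟨g b, hfg b⟩⟩⟩
  exact ⟨⟨fun h => ((main (hsub.mp h)).1).2, fun h => hsub.mpr (backμ h)⟩,
    fun h => (main (hsub.mp h)).1,
    ⟨fun h => ((main (hsub.mp h)).2).2, fun h => hsub.mpr (backf h)⟩,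
    fun h => (main (hsub.mp h)).2⟩

end MoritaHochschild
end
end

section
/- Let (C,e) be a Morita context with B = e'Ce' and Morita defects C̄ = C/CeC, C̄' = C/Ce'C. If C̄' = 0 (so that B and C are Morita equivalent), then grade_B(C̄) = grade_C(C̄), where C̄ is regarded as a right B-module via the natural surjection B → C̄ and as a right C-module via the quotient map. -/
open CategoryTheory MulOpposite

attribute [local instance] HasDerivedCategory.standard
attribute [local instance] CategoryTheory.hasExt_of_hasDerivedCategory

set_option maxHeartbeats 1000000
set_option synthInstance.maxHeartbeats 400000
set_option linter.unusedSectionVars false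
set_option linter.unusedVariables false

noncomputable section
namespace MoritaHochschild

/-! ### Corners `pCq` of a ring with idempotents `p`, `q` -/

variable {C : Type} [Ring C]

/-! ### `C̄` as a quotient of `B = e'Ce'` -/

/-- The canonical ring homomorphism `B = e'Ce' → C̄ = C/CeC`, where `e' = 1 - e`. -/
def betaBar (e : C) [Fact (IsIdempotentElem e)] :
    Hand (1 - e) (1 - e) →+* CBar e where
  toFun b := cbarMk e b.val
  map_one' := by
    show cbarMk e (1 - e) = 1
    rw [map_sub, map_one]
    have h0 : cbarMk e e = 0 :=
      (cbarMk_eq_zero_iff e e).2 (TwoSidedIdeal.subset_span rfl)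
    rw [h0, sub_zero]
  map_mul' x y := by
    show cbarMk e (x.val * y.val) = _
    rw [map_mul]
  map_zero' := map_zero _
  map_add' x y := by
    show cbarMk e (x.val + y.val) = _
    rw [map_add]

/-- `C̄` as a right module over `B = e'Ce'`. -/
noncomputable instance cbarModB (e : C) [Fact (IsIdempotentElem e)] :
    Module (Hand (1 - e) (1 - e))ᵐᵒᵖ (CBar e) :=
  Module.compHom (CBar e) (RingHom.op (betaBar e))

lemma op_smul_cbarB (e : C) [Fact (IsIdempotentElem e)] (b : Hand (1 - e) (1 - e))
    (x : CBar e) : (MulOpposite.op b) • x = x * cbarMk e b.val := rfl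

/-- `C̄` as a left module over `B = e'Ce'`. -/
noncomputable instance cbarLModB (e : C) [Fact (IsIdempotentElem e)] :
    Module (Hand (1 - e) (1 - e)) (CBar e) :=
  Module.compHom (CBar e) (betaBar e)
/-! ### Grade of a module, via vanishing of Ext -/

/-- The grade of a right `R`-module `X`:
`grade_R X = inf { i | Ext^i_R(X, R) ≠ 0 }`, as an element of `ℕ∞`. -/
def rgrade (R : Type) [Ring R] (X : Type) [AddCommGroup X] [Module Rᵐᵒᵖ X] : ℕ∞ :=
  sInf {i : ℕ∞ | ∃ n : ℕ, i = n ∧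
    ¬ Subsingleton (Abelian.Ext (ModuleCat.of Rᵐᵒᵖ X) (ModuleCat.of Rᵐᵒᵖ R) n)}

/-- The grade of a left `R`-module `X`. -/
def lgrade (R : Type) [Ring R] (X : Type) [AddCommGroup X] [Module R X] : ℕ∞ :=
  sInf {i : ℕ∞ | ∃ n : ℕ, i = n ∧
    ¬ Subsingleton (Abelian.Ext (ModuleCat.of R X) (ModuleCat.of R R) n)}


/-! ### Auxiliary: transport of Ext along equivalences of abelian categories -/

section CatPart

open CategoryTheory Limits DerivedCategory

universe v u

variable {A : Type u} [Category.{v} A] [Abelian A]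
  {B : Type u} [Category.{v} B] [Abelian B] (E : A ≌ B)

instance equivFunctorAdditive : E.functor.Additive :=
  E.functor.additive_of_preserves_binary_products

/-- The localizer morphism induced by an equivalence is a localized equivalence. -/
lemma locEquiv :
    (E.functor.mapHomologicalComplexUpToQuasiIsoLocalizerMorphism
      (ComplexShape.up ℤ)).IsLocalizedEquivalence := by
  haveI : (E.functor.mapHomologicalComplexUpToQuasiIsoLocalizerMorphism
      (ComplexShape.up ℤ)).functor.IsEquivalence :=
    inferInstanceAs (E.mapHomologicalComplex (ComplexShape.up ℤ)).functor.IsEquivalence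
  apply LocalizerMorphism.IsLocalizedEquivalence.of_equivalence
  intro K L f hf
  refine ⟨_, _, (E.inverse.mapHomologicalComplex _).map f, ?_, ⟨Arrow.isoMk
    (((E.mapHomologicalComplex (ComplexShape.up ℤ)).counitIso).app K)
    (((E.mapHomologicalComplex (ComplexShape.up ℤ)).counitIso).app L) ?_⟩⟩
  · have : QuasiIso f := hf
    exact HomologicalComplex.quasiIso_map_of_preservesHomology _ _
  · exact (((E.mapHomologicalComplex (ComplexShape.up ℤ)).counitIso).hom.naturality f).symm

instance mapDCisEquiv : E.functor.mapDerivedCategory.IsEquivalence := by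
  haveI := locEquiv E
  exact LocalizerMorphism.localizedFunctor_isEquivalence _ DerivedCategory.Q DerivedCategory.Q

variable (A) in
/-- The derived single functor agrees with composing the cochain single functor with `Q`. -/
def singleQIso :
    DerivedCategory.singleFunctor A 0 ≅ CochainComplex.singleFunctor A 0 ⋙ DerivedCategory.Q :=
  (SingleFunctors.evaluation _ _ (0 : ℤ)).mapIso (DerivedCategory.singleFunctorsPostcompQIso A)

/-- Compatibility of `mapDerivedCategory` with single functors. -/
def mapSingleIso (X : A) :
    E.functor.mapDerivedCategory.obj ((DerivedCategory.singleFunctor A 0).obj X) ≅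
      (DerivedCategory.singleFunctor B 0).obj (E.functor.obj X) :=
  E.functor.mapDerivedCategory.mapIso ((singleQIso A).app X) ≪≫
    E.functor.mapDerivedCategoryFactors.app ((CochainComplex.singleFunctor A 0).obj X) ≪≫
    DerivedCategory.Q.mapIso
      ((HomologicalComplex.singleMapHomologicalComplex E.functor (ComplexShape.up ℤ) 0).app X) ≪≫
    (singleQIso B).symm.app (E.functor.obj X)

/-- Transport of Ext-groups along an equivalence of abelian categories. -/
def extEquiv (X Y : A) (n : ℕ) :
    Abelian.Ext X Y n ≃ Abelian.Ext (E.functor.obj X) (E.functor.obj Y) n :=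
  Abelian.Ext.homEquiv.trans (Equiv.trans (by
    refine ((Functor.FullyFaithful.ofFullyFaithful E.functor.mapDerivedCategory).homEquiv).trans
      (Iso.homCongr (mapSingleIso E X) ?_)
    exact (E.functor.mapDerivedCategory.commShiftIso (n : ℤ)).app _ ≪≫
      (shiftFunctor _ (n : ℤ)).mapIso (mapSingleIso E Y))
    Abelian.Ext.homEquiv.symm)

section ExtLemmas

variable {D : Type u} [Category.{v} D] [Abelian D]

open Abelian

lemma ext_mk₀_add {X Y : D} (f g : X ⟶ Y) :
    Ext.mk₀ (f + g) = Ext.mk₀ f + Ext.mk₀ g := by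
  apply Abelian.Ext.ext
  rw [Abelian.Ext.add_hom, Ext.mk₀_hom, Ext.mk₀_hom, Ext.mk₀_hom,
    Functor.map_add]
  dsimp [ShiftedHom.mk₀]
  rw [Preadditive.add_comp]

/-- `mk₀` as an additive map. -/
def extMk₀Hom (X Y : D) : (X ⟶ Y) →+ Abelian.Ext X Y 0 :=
  AddMonoidHom.mk' Ext.mk₀ ext_mk₀_add

lemma subsingleton_ext_of_retract {X M N : D} (i : M ⟶ N) (r : N ⟶ M)
    (hir : i ≫ r = 𝟙 M) (n : ℕ)
    (h : Subsingleton (Abelian.Ext X N n)) : Subsingleton (Abelian.Ext X M n) := by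
  constructor
  intro a b
  have key : ∀ α : Abelian.Ext X M n,
      α = (α.comp (Ext.mk₀ i) (add_zero n)).comp (Ext.mk₀ r) (add_zero n) := by
    intro α
    rw [Ext.comp_assoc_of_third_deg_zero, Ext.mk₀_comp_mk₀, hir, Ext.comp_mk₀_id]
  rw [key a, key b, h.elim (a.comp (Ext.mk₀ i) (add_zero n)) (b.comp (Ext.mk₀ i) (add_zero n))]

lemma subsingleton_ext_of_sum_id {X N Bm : D} {m : ℕ}
    (p : Fin m → (N ⟶ Bm)) (s : Fin m → (Bm ⟶ N))
    (hsum : (∑ i, p i ≫ s i) = 𝟙 N) (n : ℕ)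
    (h : Subsingleton (Abelian.Ext X Bm n)) : Subsingleton (Abelian.Ext X N n) := by
  constructor
  intro a b
  have key : ∀ α : Abelian.Ext X N n,
      α = ∑ i, (α.comp (Ext.mk₀ (p i)) (add_zero n)).comp (Ext.mk₀ (s i)) (add_zero n) := by
    intro α
    conv_lhs => rw [← Ext.comp_mk₀_id α, ← hsum]
    have h1 : Ext.mk₀ (∑ i, p i ≫ s i) = ∑ i, Ext.mk₀ (p i ≫ s i) :=
      map_sum (extMk₀Hom N N) _ _
    rw [h1]
    have h2 := map_sum (α.precomp N (add_zero n)) (fun i => Ext.mk₀ (p i ≫ s i)) Finset.univ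
    simp only [Abelian.Ext.bilinearComp_apply_apply] at h2
    rw [h2]
    refine Finset.sum_congr rfl (fun i _ => ?_)
    rw [← Ext.mk₀_comp_mk₀, Ext.comp_assoc_of_third_deg_zero]
  rw [key a, key b]
  refine Finset.sum_congr rfl (fun i _ => ?_)
  rw [h.elim (a.comp (Ext.mk₀ (p i)) (add_zero n)) (b.comp (Ext.mk₀ (p i)) (add_zero n))]

/-- Transport of Ext along isomorphisms of both arguments. -/
def extIsoCongr {X X' Y Y' : D} (eX : X ≅ X') (eY : Y ≅ Y') (n : ℕ) :
    Abelian.Ext X Y n ≃ Abelian.Ext X' Y' n where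
  toFun α := (Ext.mk₀ eX.inv).comp (α.comp (Ext.mk₀ eY.hom) (add_zero n)) (zero_add n)
  invFun β := (Ext.mk₀ eX.hom).comp (β.comp (Ext.mk₀ eY.inv) (add_zero n)) (zero_add n)
  left_inv α := by simp
  right_inv β := by simp

end ExtLemmas

end CatPart


/-! ### The Morita equivalence between `Mod-C` and `Mod-B` when `C = Ce'C` -/

section Morita

open CategoryTheory

variable {C : Type} [Ring C] (e : C) [he : Fact (IsIdempotentElem e)]

/-- A finite-sum representation of `1` when the defect `C/Ce'C` vanishes. -/
lemma exists_sum_rep (hC' : Subsingleton (CBar (1 - e))) :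
    ∃ (m : ℕ) (c d : Fin m → C), (∑ i, c i * (1 - e) * d i) = 1 := by
  classical
  have h1 : (1 : C) ∈ TwoSidedIdeal.span {(1 : C) - e} :=
    (cbarMk_eq_zero_iff (1 - e) 1).1 (Subsingleton.elim _ _)
  let S : TwoSidedIdeal C := TwoSidedIdeal.mk'
    {y | ∃ (m : ℕ) (c d : Fin m → C), (∑ i, c i * (1 - e) * d i) = y}
    ⟨0, Fin.elim0, Fin.elim0, by simp⟩
    (fun {x y} hx hy => by
      obtain ⟨m₁, c₁, d₁, h₁⟩ := hx
      obtain ⟨m₂, c₂, d₂, h₂⟩ := hy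
      refine ⟨m₁ + m₂, Fin.append c₁ c₂, Fin.append d₁ d₂, ?_⟩
      rw [Fin.sum_univ_add]
      simp only [Fin.append_left, Fin.append_right, h₁, h₂])
    (fun {x} hx => by
      obtain ⟨m, c, d, h⟩ := hx
      exact ⟨m, fun i => -(c i), d, by
        simp only [neg_mul]
        rw [Finset.sum_neg_distrib, h]⟩)
    (fun {x y} hy => by
      obtain ⟨m, c, d, h⟩ := hy
      refine ⟨m, fun i => x * c i, d, ?_⟩
      rw [← h, Finset.mul_sum]
      exact Finset.sum_congr rfl fun i _ => by simp [mul_assoc])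
    (fun {x y} hx => by
      obtain ⟨m, c, d, h⟩ := hx
      refine ⟨m, c, fun i => d i * y, ?_⟩
      rw [← h, Finset.sum_mul]
      exact Finset.sum_congr rfl fun i _ => by simp [mul_assoc])
  have hS : (1 : C) ∈ S := by
    refine (TwoSidedIdeal.mem_span_iff.1 h1) S ?_
    rintro x rfl
    show ∃ _, _
    exact ⟨1, fun _ => 1, fun _ => 1, by simp⟩
  obtain ⟨m, c, d, h⟩ := hS
  rw [sub_zero] at h
  exact ⟨m, c, d, h⟩

/-- The subset `Y·e'` of a right `C`-module `Y`, as a right `B = e'Ce'`-module. -/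
def Fix (Y : Type) [AddCommGroup Y] [Module Cᵐᵒᵖ Y] : Type :=
  {y : Y // (op (1 - e) : Cᵐᵒᵖ) • y = y}

namespace Fix

variable {e}
variable {Y : Type} [AddCommGroup Y] [Module Cᵐᵒᵖ Y]

def val (x : Fix e Y) : Y := x.1

lemma prop (x : Fix e Y) : (op (1 - e) : Cᵐᵒᵖ) • x.val = x.val := x.2

lemma val_injective : Function.Injective (val (e := e) (Y := Y)) :=
  fun _ _ h => Subtype.ext h

instance : Zero (Fix e Y) := ⟨⟨0, smul_zero _⟩⟩
instance : Add (Fix e Y) := ⟨fun x y => ⟨x.1 + y.1, by rw [smul_add, x.2, y.2]⟩⟩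
instance : Neg (Fix e Y) := ⟨fun x => ⟨-x.1, by rw [smul_neg, x.2]⟩⟩
instance : Sub (Fix e Y) := ⟨fun x y => ⟨x.1 - y.1, by rw [smul_sub, x.2, y.2]⟩⟩
instance : SMul ℕ (Fix e Y) := ⟨fun n x => ⟨n • x.1, by rw [smul_comm, x.2]⟩⟩
instance : SMul ℤ (Fix e Y) := ⟨fun n x => ⟨n • x.1, by rw [smul_comm, x.2]⟩⟩

instance : AddCommGroup (Fix e Y) :=
  val_injective.addCommGroup val rfl (fun _ _ => rfl) (fun _ => rfl) (fun _ _ => rfl)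
    (fun _ _ => rfl) (fun _ _ => rfl)

@[simp] lemma val_add (x y : Fix e Y) : (x + y).val = x.val + y.val := rfl
@[simp] lemma val_zero : (0 : Fix e Y).val = 0 := rfl

instance module : Module (Hand (1 - e) (1 - e))ᵐᵒᵖ (Fix e Y) where
  smul b x := ⟨(op b.unop.val : Cᵐᵒᵖ) • x.1, by
    rw [← mul_smul, ← MulOpposite.op_mul, Hand.right_absorb b.unop]⟩
  one_smul x := Subtype.ext (by
    show (op ((1 : Hand (1 - e) (1 - e)).val) : Cᵐᵒᵖ) • x.1 = x.1
    rw [Hand.val_one]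
    exact x.2)
  mul_smul a b x := Subtype.ext (by
    show (op ((b.unop * a.unop).val) : Cᵐᵒᵖ) • x.1 =
      (op a.unop.val : Cᵐᵒᵖ) • ((op b.unop.val : Cᵐᵒᵖ) • x.1)
    rw [Hand.val_mul, MulOpposite.op_mul, mul_smul])
  smul_zero b := Subtype.ext (by
    show (op b.unop.val : Cᵐᵒᵖ) • (0 : Y) = 0
    rw [smul_zero])
  smul_add b x y := Subtype.ext (by
    show (op b.unop.val : Cᵐᵒᵖ) • (x.1 + y.1) =
      (op b.unop.val : Cᵐᵒᵖ) • x.1 + (op b.unop.val : Cᵐᵒᵖ) • y.1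
    rw [smul_add])
  add_smul a b x := Subtype.ext (by
    show (op ((MulOpposite.unop (a + b)).val) : Cᵐᵒᵖ) • x.1 =
      (op a.unop.val : Cᵐᵒᵖ) • x.1 + (op b.unop.val : Cᵐᵒᵖ) • x.1
    rw [MulOpposite.unop_add, Hand.val_add, MulOpposite.op_add, add_smul])
  zero_smul x := Subtype.ext (by
    show (op ((MulOpposite.unop (0 : (Hand (1 - e) (1 - e))ᵐᵒᵖ)).val) : Cᵐᵒᵖ) • x.1 = 0
    rw [MulOpposite.unop_zero, Hand.val_zero, MulOpposite.op_zero, zero_smul])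

@[simp] lemma val_smul (b : (Hand (1 - e) (1 - e))ᵐᵒᵖ) (x : Fix e Y) :
    (b • x).val = (op b.unop.val : Cᵐᵒᵖ) • x.val := rfl

end Fix

/-- The functor `Mod-C ⥤ Mod-B`, `Y ↦ Ye'`. -/
def fixFunctor : ModuleCat Cᵐᵒᵖ ⥤ ModuleCat (Hand (1 - e) (1 - e))ᵐᵒᵖ where
  obj Y := ModuleCat.of _ (Fix e Y)
  map {Y Y'} f := ModuleCat.ofHom
    { toFun := fun y => ⟨f y.1, by rw [← map_smul, y.2]⟩
      map_add' := fun x y => Subtype.ext (by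
        show f (x.1 + y.1) = f x.1 + f y.1
        rw [map_add])
      map_smul' := fun b x => Subtype.ext (by
        show f ((op b.unop.val : Cᵐᵒᵖ) • x.1) = (op b.unop.val : Cᵐᵒᵖ) • f x.1
        rw [map_smul]) }
  map_id _ := rfl
  map_comp _ _ := rfl

/-- Left multiplication by `c` on `P = Ce'`, as a right `B`-module map. -/
def lmulP (c : C) :
    Hand (1 : C) (1 - e) →ₗ[(Hand (1 - e) (1 - e))ᵐᵒᵖ] Hand (1 : C) (1 - e) where
  toFun x := c • x
  map_add' := smul_add c
  map_smul' b x := Subtype.ext (by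
    show c * (x.val * b.unop.val) = (c * x.val) * b.unop.val
    rw [mul_assoc])

instance homModule {X : Type} [AddCommGroup X]
    [Module (Hand (1 - e) (1 - e))ᵐᵒᵖ X] :
    Module Cᵐᵒᵖ (Hand (1 : C) (1 - e) →ₗ[(Hand (1 - e) (1 - e))ᵐᵒᵖ] X) where
  smul c f := f ∘ₗ lmulP e c.unop
  one_smul f := LinearMap.ext fun x => by
    show f ((1 : C) • x) = f x
    rw [one_smul]
  mul_smul a b f := LinearMap.ext fun x => by
    show f (((a * b).unop : C) • x) = f ((b.unop : C) • ((a.unop : C) • x))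
    rw [← mul_smul]
    rfl
  smul_zero c := rfl
  smul_add c f g := rfl
  add_smul a b f := LinearMap.ext fun x => by
    show f (((a + b).unop : C) • x) = f ((a.unop : C) • x) + f ((b.unop : C) • x)
    rw [← map_add]
    congr 1
    show ((a.unop + b.unop : C)) • x = _
    rw [add_smul]
  zero_smul f := LinearMap.ext fun x => by
    show f ((0 : C) • x) = 0
    rw [zero_smul, map_zero]

@[simp] lemma homModule_smul_apply {X : Type} [AddCommGroup X]
    [Module (Hand (1 - e) (1 - e))ᵐᵒᵖ X]
    (c : Cᵐᵒᵖ) (f : Hand (1 : C) (1 - e) →ₗ[(Hand (1 - e) (1 - e))ᵐᵒᵖ] X)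
    (x : Hand (1 : C) (1 - e)) :
    (c • f) x = f ((c.unop : C) • x) := rfl

/-- The functor `Mod-B ⥤ Mod-C`, `X ↦ Hom_B(Ce', X)`. -/
def homFunctor : ModuleCat (Hand (1 - e) (1 - e))ᵐᵒᵖ ⥤ ModuleCat Cᵐᵒᵖ where
  obj X := ModuleCat.of _ (Hand (1 : C) (1 - e) →ₗ[(Hand (1 - e) (1 - e))ᵐᵒᵖ] X)
  map {X X'} g := ModuleCat.ofHom
    { toFun := fun f => g.hom ∘ₗ f
      map_add' := fun f₁ f₂ => LinearMap.ext fun x => map_add g.hom _ _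
      map_smul' := fun c f => rfl }
  map_id _ := rfl
  map_comp _ _ := rfl

/-! ### Unit and counit of the Morita equivalence -/

/-- The element `e'` of `P = Ce'`. -/
def pe : Hand (1 : C) (1 - e) :=
  ⟨1 - e, by rw [one_mul]; exact he.out.one_sub⟩

@[simp] lemma pe_val : (pe e).val = 1 - e := rfl

lemma mulval_mem (v : C) (x : Hand (1 : C) (1 - e)) :
    (1 : C) * (v * x.val) * (1 - e) = v * x.val := by
  rw [one_mul, mul_assoc, Hand.right_absorb x]

lemma emul_mem (v : C) (hv : v * (1 - e) = v) :
    (1 - e) * ((1 - e) * v) * (1 - e) = (1 - e) * v := by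
  rw [← mul_assoc (1 - e) (1 - e) v, he.out.one_sub, mul_assoc, hv]

namespace Fix

variable {e} {Y : Type} [AddCommGroup Y] [Module Cᵐᵒᵖ Y]

/-- `val` as an additive map. -/
def valHom : Fix e Y →+ Y where
  toFun := val
  map_zero' := rfl
  map_add' := fun _ _ => rfl

@[simp] lemma valHom_apply (x : Fix e Y) : (valHom x : Y) = x.val := rfl

end Fix

section Unit

variable (Y : Type) [AddCommGroup Y] [Module Cᵐᵒᵖ Y]

variable {Y} in
/-- `y ↦ (x ↦ y·x)`. -/
def unitMapFun (y : Y) :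
    Hand (1 : C) (1 - e) →ₗ[(Hand (1 - e) (1 - e))ᵐᵒᵖ] Fix e Y where
  toFun x := ⟨(op x.val : Cᵐᵒᵖ) • y, by
    rw [← mul_smul, ← MulOpposite.op_mul, Hand.right_absorb]⟩
  map_add' x₁ x₂ := Subtype.ext (by
    show (op ((x₁ + x₂).val) : Cᵐᵒᵖ) • y = (op x₁.val : Cᵐᵒᵖ) • y + (op x₂.val : Cᵐᵒᵖ) • y
    rw [Hand.val_add, MulOpposite.op_add, add_smul])
  map_smul' b x := Subtype.ext (by
    show (op ((b • x).val) : Cᵐᵒᵖ) • y = (op b.unop.val : Cᵐᵒᵖ) • ((op x.val : Cᵐᵒᵖ) • y)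
    rw [Hand.val_op_smul, MulOpposite.op_mul, mul_smul])

/-- The unit `Y → Hom_B(Ce', Ye')` of the Morita equivalence. -/
def unitMap :
    Y →ₗ[Cᵐᵒᵖ] (Hand (1 : C) (1 - e) →ₗ[(Hand (1 - e) (1 - e))ᵐᵒᵖ] Fix e Y) where
  toFun := unitMapFun e
  map_add' y₁ y₂ := LinearMap.ext fun x => Subtype.ext (by
    show (op x.val : Cᵐᵒᵖ) • (y₁ + y₂) = (op x.val : Cᵐᵒᵖ) • y₁ + (op x.val : Cᵐᵒᵖ) • y₂
    rw [smul_add])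
  map_smul' c y := LinearMap.ext fun x => Subtype.ext (by
    show (op x.val : Cᵐᵒᵖ) • (c • y) =
      (op (((MulOpposite.unop c : C) • x : Hand (1 : C) (1 - e)).val) : Cᵐᵒᵖ) • y
    rw [Hand.val_smul', MulOpposite.op_mul, mul_smul, MulOpposite.op_unop])

variable {Y}

@[simp] lemma unitMap_apply_val (y : Y) (x : Hand (1 : C) (1 - e)) :
    ((unitMap e Y y) x).val = (op x.val : Cᵐᵒᵖ) • y := rfl

variable {m : ℕ} {cc dd : Fin m → C}

/-- The generator elements `cᵢe'` of `P`. -/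
def pc (i : Fin m) (cc : Fin m → C) : Hand (1 : C) (1 - e) :=
  ⟨cc i * (1 - e), by rw [one_mul, mul_assoc]; rw [he.out.one_sub]⟩

variable (hcd : ∑ i, cc i * (1 - e) * dd i = 1)

include hcd in
lemma key_smul_sum (y : Y) :
    ∑ i, (op (dd i) : Cᵐᵒᵖ) • ((op (cc i * (1 - e)) : Cᵐᵒᵖ) • y) = y := by
  have h2 : ∀ i ∈ Finset.univ, (op (dd i) : Cᵐᵒᵖ) • ((op (cc i * (1 - e)) : Cᵐᵒᵖ) • y) =
      (op (cc i * (1 - e) * dd i) : Cᵐᵒᵖ) • y := fun i _ => by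
    rw [← mul_smul, ← MulOpposite.op_mul]
  rw [Finset.sum_congr rfl h2, ← Finset.sum_smul]
  have h3 := map_sum (MulOpposite.opAddEquiv (α := C))
    (fun i => cc i * (1 - e) * dd i) Finset.univ
  simp only [MulOpposite.opAddEquiv_apply] at h3
  rw [hcd] at h3
  rw [← h3, MulOpposite.op_one, one_smul]

include hcd in
lemma unitMap_bijective : Function.Bijective (unitMap e Y) := by
  constructor
  · intro y₁ y₂ hy
    have h12 : ∀ i : Fin m, (op (cc i * (1 - e)) : Cᵐᵒᵖ) • y₁ =
        (op (cc i * (1 - e)) : Cᵐᵒᵖ) • y₂ := by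
      intro i
      have h0 := congrArg (fun g => ((g : Hand (1 : C) (1 - e) →ₗ[(Hand (1 - e) (1 - e))ᵐᵒᵖ]
        Fix e Y) (pc e i cc)).val) hy
      exact h0
    rw [← key_smul_sum e hcd y₁, ← key_smul_sum e hcd y₂]
    exact Finset.sum_congr rfl fun i _ => by rw [h12 i]
  · intro f
    refine ⟨∑ i, (op (dd i) : Cᵐᵒᵖ) • (f (pc e i cc)).val, ?_⟩
    apply LinearMap.ext
    intro x
    apply Subtype.ext
    show (op x.val : Cᵐᵒᵖ) • (∑ i, (op (dd i) : Cᵐᵒᵖ) • (f (pc e i cc)).val) = (f x).val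
    rw [Finset.smul_sum]
    have step : ∀ i ∈ Finset.univ,
        (op x.val : Cᵐᵒᵖ) • ((op (dd i) : Cᵐᵒᵖ) • (f (pc e i cc)).val) =
          (f (Hand.mk ((cc i * (1 - e) * dd i) * x.val) (mulval_mem e _ x))).val := by
      intro i _
      have hb : (1 - e) * ((1 - e) * (dd i * x.val)) * (1 - e) =
          (1 - e) * (dd i * x.val) := by
        apply emul_mem
        rw [mul_assoc (dd i) x.val (1 - e), Hand.right_absorb x]
      rw [← mul_smul, ← MulOpposite.op_mul]
      conv_lhs => rw [← Fix.prop (f (pc e i cc))]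
      rw [← mul_smul, ← MulOpposite.op_mul]
      have h5 : (op ((1 - e) * (dd i * x.val)) : Cᵐᵒᵖ) • (f (pc e i cc)).val =
          ((MulOpposite.op (Hand.mk ((1 - e) * (dd i * x.val)) hb) •
            f (pc e i cc)) : Fix e Y).val := rfl
      rw [h5, ← map_smul f _ (pc e i cc)]
      apply congrArg (fun z => (f z).val)
      apply Subtype.ext
      show (pc e i cc).val * ((1 - e) * (dd i * x.val)) = (cc i * (1 - e) * dd i) * x.val
      show cc i * (1 - e) * ((1 - e) * (dd i * x.val)) = _
      rw [← mul_assoc (cc i * (1 - e)) (1 - e) (dd i * x.val), mul_assoc (cc i) (1 - e) (1 - e),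
        he.out.one_sub, ← mul_assoc (cc i * (1 - e)) (dd i) x.val]
    rw [Finset.sum_congr rfl step]
    have hx : x = ∑ i, Hand.mk ((cc i * (1 - e) * dd i) * x.val) (mulval_mem e _ x) := by
      apply Hand.val_injective
      show Hand.valHom x =
        Hand.valHom (∑ i, Hand.mk ((cc i * (1 - e) * dd i) * x.val) (mulval_mem e _ x))
      rw [map_sum (Hand.valHom (p := (1 : C)) (q := 1 - e)) _ Finset.univ]
      show x.val = ∑ i, (cc i * (1 - e) * dd i) * x.val
      rw [← Finset.sum_mul, hcd, one_mul]
    conv_rhs => rw [hx]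
    show (∑ i, Fix.valHom (f (Hand.mk ((cc i * (1 - e) * dd i) * x.val) (mulval_mem e _ x)))) =
      Fix.valHom (f (∑ i, Hand.mk ((cc i * (1 - e) * dd i) * x.val) (mulval_mem e _ x)))
    rw [map_sum f _ Finset.univ]
    exact (map_sum (Fix.valHom (e := e) (Y := Y)) _ Finset.univ).symm

end Unit

section Counit

variable (X : Type) [AddCommGroup X] [Module (Hand (1 - e) (1 - e))ᵐᵒᵖ X]

/-- The counit `Hom_B(Ce', X)e' → X` of the Morita equivalence. -/
def counitMap :
    Fix e (Hand (1 : C) (1 - e) →ₗ[(Hand (1 - e) (1 - e))ᵐᵒᵖ] X)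
      →ₗ[(Hand (1 - e) (1 - e))ᵐᵒᵖ] X where
  toFun f := f.val (pe e)
  map_add' f g := rfl
  map_smul' b f := by
    show (f.val) ((b.unop.val : C) • pe e) = b • (f.val (pe e))
    rw [← map_smul f.val b (pe e)]
    congr 1
    apply Subtype.ext
    show b.unop.val * (1 - e) = (pe e).val * b.unop.val
    rw [Hand.right_absorb b.unop]
    show _ = (1 - e) * b.unop.val
    rw [Hand.left_absorb b.unop]

variable {X}

/-- Section of the counit. -/
def counitSection (x : X) :
    Hand (1 : C) (1 - e) →ₗ[(Hand (1 - e) (1 - e))ᵐᵒᵖ] X where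
  toFun p := MulOpposite.op (Hand.mk ((1 - e) * p.val)
    (emul_mem e p.val (Hand.right_absorb p))) • x
  map_add' p q := by
    have h1 : Hand.mk ((1 - e) * (p + q).val)
        (emul_mem e (p + q).val (Hand.right_absorb (p + q))) =
        Hand.mk ((1 - e) * p.val) (emul_mem e p.val (Hand.right_absorb p)) +
        Hand.mk ((1 - e) * q.val) (emul_mem e q.val (Hand.right_absorb q)) := Subtype.ext (by
      show (1 - e) * (p.val + q.val) = (1 - e) * p.val + (1 - e) * q.val
      rw [mul_add])
    rw [h1, MulOpposite.op_add, add_smul]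
  map_smul' b p := by
    have h1 : Hand.mk ((1 - e) * (b • p).val)
        (emul_mem e (b • p).val (Hand.right_absorb (b • p))) =
        Hand.mk ((1 - e) * p.val) (emul_mem e p.val (Hand.right_absorb p)) * b.unop :=
      Subtype.ext (by
        show (1 - e) * (p.val * b.unop.val) = ((1 - e) * p.val) * b.unop.val
        rw [mul_assoc])
    show MulOpposite.op (Hand.mk ((1 - e) * (b • p).val)
      (emul_mem e (b • p).val (Hand.right_absorb (b • p)))) • x = _
    rw [h1, MulOpposite.op_mul, mul_smul]
    rfl

lemma counitMap_bijective : Function.Bijective (counitMap e X) := by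
  constructor
  · intro f g hfg
    apply Subtype.ext
    apply LinearMap.ext
    intro x
    have key : ∀ h : Fix e (Hand (1 : C) (1 - e) →ₗ[(Hand (1 - e) (1 - e))ᵐᵒᵖ] X),
        h.1 x = MulOpposite.op (Hand.mk ((1 - e) * x.val)
          (emul_mem e x.val (Hand.right_absorb x))) • (h.1 (pe e)) := by
      intro h
      rw [← map_smul h.1 _ (pe e)]
      have h1 : h.1 x = h.1 ((1 - e : C) • x) := by
        conv_lhs => rw [← h.2]
        rfl
      rw [h1]
      apply congrArg
      apply Subtype.ext
      show (1 - e) * x.val = (pe e).val * ((1 - e) * x.val)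
      show _ = (1 - e) * ((1 - e) * x.val)
      rw [← mul_assoc (1 - e) (1 - e) x.val, he.out.one_sub]
    rw [key f, key g]
    have hpe : f.1 (pe e) = g.1 (pe e) := hfg
    rw [hpe]
  · intro x
    refine ⟨⟨counitSection e x, ?_⟩, ?_⟩
    · apply LinearMap.ext
      intro p
      show MulOpposite.op (Hand.mk ((1 - e) * ((1 - e : C) • p).val)
          (emul_mem e _ (Hand.right_absorb _))) • x =
        MulOpposite.op (Hand.mk ((1 - e) * p.val)
          (emul_mem e p.val (Hand.right_absorb p))) • x
      congr 2
      apply Subtype.ext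
      show (1 - e) * ((1 - e) * p.val) = (1 - e) * p.val
      rw [← mul_assoc (1 - e) (1 - e) p.val, he.out.one_sub]
    · show MulOpposite.op (Hand.mk ((1 - e) * (pe e).val)
        (emul_mem e _ (Hand.right_absorb _))) • x = x
      have h1 : Hand.mk ((1 - e) * (pe e).val)
          (emul_mem e (pe e).val (Hand.right_absorb (pe e))) = 1 := Subtype.ext (by
        show (1 - e) * (1 - e) = 1 - e
        exact he.out.one_sub)
      rw [h1, MulOpposite.op_one, one_smul]

end Counit

section Assemble

open CategoryTheory

variable {m : ℕ} {cc dd : Fin m → C} (hcd : ∑ i, cc i * (1 - e) * dd i = 1)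

include hcd in
/-- The Morita equivalence `Mod-C ≌ Mod-B` when `C = Ce'C`. -/
noncomputable def moritaEquiv : ModuleCat Cᵐᵒᵖ ≌ ModuleCat (Hand (1 - e) (1 - e))ᵐᵒᵖ :=
  CategoryTheory.Equivalence.mk (fixFunctor e) (homFunctor e)
    (NatIso.ofComponents
      (fun Y => (LinearEquiv.ofBijective (unitMap e Y) (unitMap_bijective e hcd)).toModuleIso)
      (fun {Y Y'} f => by
        apply ModuleCat.hom_ext
        apply LinearMap.ext; intro y
        apply LinearMap.ext; intro x
        apply Subtype.ext
        show (op x.val : Cᵐᵒᵖ) • f y = f ((op x.val : Cᵐᵒᵖ) • y)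
        rw [map_smul]))
    (NatIso.ofComponents
      (fun X => (LinearEquiv.ofBijective (counitMap e X) (counitMap_bijective e)).toModuleIso)
      (fun {X X'} g => by
         apply ModuleCat.hom_ext
         apply LinearMap.ext; intro f
         rfl))

/-- `C̄·e' = C̄` as right `B`-modules. -/
noncomputable def cbarFixIso :
    (fixFunctor e).obj (ModuleCat.of Cᵐᵒᵖ (CBar e)) ≅
      ModuleCat.of (Hand (1 - e) (1 - e))ᵐᵒᵖ (CBar e) :=
  LinearEquiv.toModuleIso
    ({ toFun := fun x => x.1
       invFun := fun x => ⟨x, by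
         rw [op_smul_cbar, map_sub, map_one,
           (cbarMk_eq_zero_iff e e).2 (TwoSidedIdeal.subset_span rfl), sub_zero, mul_one]⟩
       left_inv := fun x => rfl
       right_inv := fun x => rfl
       map_add' := fun x y => rfl
       map_smul' := fun b x => by
         show (op (b.unop.val) : Cᵐᵒᵖ) • x.1 = b • x.1
         rw [op_smul_cbar,
           show b • x.1 = x.1 * cbarMk e (b.unop.val) from op_smul_cbarB e b.unop x.1] } :
      Fix e (CBar e) ≃ₗ[(Hand (1 - e) (1 - e))ᵐᵒᵖ] CBar e)

/-- `C·e' = Ce'` as right `B`-modules. -/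
noncomputable def cFixIso :
    (fixFunctor e).obj (ModuleCat.of Cᵐᵒᵖ C) ≅
      ModuleCat.of (Hand (1 - e) (1 - e))ᵐᵒᵖ (Hand (1 : C) (1 - e)) :=
  LinearEquiv.toModuleIso
    ({ toFun := fun x => Hand.mk x.1 (by rw [one_mul]; exact x.2)
       invFun := fun p => ⟨p.val, Hand.right_absorb p⟩
       left_inv := fun x => rfl
       right_inv := fun p => rfl
       map_add' := fun x y => rfl
       map_smul' := fun b x => rfl } :
      Fix e C ≃ₗ[(Hand (1 - e) (1 - e))ᵐᵒᵖ] Hand (1 : C) (1 - e))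

/-- The inclusion `B = e'Ce' → Ce'`. -/
noncomputable def iB : ModuleCat.of (Hand (1 - e) (1 - e))ᵐᵒᵖ (Hand (1 - e) (1 - e)) ⟶
    ModuleCat.of (Hand (1 - e) (1 - e))ᵐᵒᵖ (Hand (1 : C) (1 - e)) :=
  ModuleCat.ofHom
  { toFun b := Hand.mk b.val (by rw [one_mul]; exact Hand.right_absorb b)
    map_add' a b := rfl
    map_smul' b' a := rfl }

/-- The retraction `Ce' → e'Ce' = B`. -/
noncomputable def rB : ModuleCat.of (Hand (1 - e) (1 - e))ᵐᵒᵖ (Hand (1 : C) (1 - e)) ⟶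
    ModuleCat.of (Hand (1 - e) (1 - e))ᵐᵒᵖ (Hand (1 - e) (1 - e)) :=
  ModuleCat.ofHom
  { toFun x := Hand.mk ((1 - e) * x.val) (emul_mem e x.val (Hand.right_absorb x))
    map_add' x y := Subtype.ext (by
      show (1 - e) * (x.val + y.val) = (1 - e) * x.val + (1 - e) * y.val
      rw [mul_add])
    map_smul' b x := Subtype.ext (by
      show (1 - e) * (x.val * b.unop.val) = ((1 - e) * x.val) * b.unop.val
      rw [mul_assoc]) }

lemma iB_rB : iB e ≫ rB e = 𝟙 _ := by
  apply ModuleCat.hom_ext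
  apply LinearMap.ext
  intro b
  apply Subtype.ext
  show (1 - e) * b.val = b.val
  exact Hand.left_absorb b

/-- The map `Ce' → B^m`. -/
noncomputable def iP : ModuleCat.of (Hand (1 - e) (1 - e))ᵐᵒᵖ (Hand (1 : C) (1 - e)) ⟶
    ModuleCat.of (Hand (1 - e) (1 - e))ᵐᵒᵖ (Fin m → Hand (1 - e) (1 - e)) :=
  ModuleCat.ofHom
  { toFun x := fun i => Hand.mk ((1 - e) * (dd i * x.val))
      (emul_mem e _ (by rw [mul_assoc, Hand.right_absorb x]))
    map_add' x y := funext fun i => Subtype.ext (by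
      show (1 - e) * (dd i * (x.val + y.val)) =
        (1 - e) * (dd i * x.val) + (1 - e) * (dd i * y.val)
      rw [mul_add (dd i), mul_add (1 - e)])
    map_smul' b x := funext fun i => Subtype.ext (by
      show (1 - e) * (dd i * (x.val * b.unop.val)) =
        ((1 - e) * (dd i * x.val)) * b.unop.val
      rw [← mul_assoc (dd i) x.val b.unop.val, ← mul_assoc (1 - e) (dd i * x.val) b.unop.val]) }

include hcd in
lemma assoc_key : ∀ i : Fin m, ∀ v : C,
    (cc i * (1 - e)) * ((1 - e) * (dd i * v)) = (cc i * (1 - e) * dd i) * v := fun i v => by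
  rw [← mul_assoc (cc i * (1 - e)) (1 - e) (dd i * v), mul_assoc (cc i) (1 - e) (1 - e),
    he.out.one_sub, ← mul_assoc (cc i * (1 - e)) (dd i) v]

/-- The retraction `B^m → Ce'`. -/
noncomputable def rP (cc : Fin m → C) :
    ModuleCat.of (Hand (1 - e) (1 - e))ᵐᵒᵖ (Fin m → Hand (1 - e) (1 - e)) ⟶
    ModuleCat.of (Hand (1 - e) (1 - e))ᵐᵒᵖ (Hand (1 : C) (1 - e)) :=
  ModuleCat.ofHom
  { toFun g := ∑ i, Hand.mk ((cc i * (1 - e)) * (g i).val)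
      (by rw [one_mul, mul_assoc, Hand.right_absorb (g i)])
    map_add' g h := by
      rw [← Finset.sum_add_distrib]
      refine Finset.sum_congr rfl fun i _ => Subtype.ext ?_
      show (cc i * (1 - e)) * ((g i).val + (h i).val) =
        (cc i * (1 - e)) * (g i).val + (cc i * (1 - e)) * (h i).val
      rw [mul_add]
    map_smul' b g := by
      rw [Finset.smul_sum]
      refine Finset.sum_congr rfl fun i _ => Subtype.ext ?_
      show (cc i * (1 - e)) * ((g i).val * b.unop.val) =
        ((cc i * (1 - e)) * (g i).val) * b.unop.val
      exact (mul_assoc _ _ _).symm }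

include hcd in
lemma iP_rP : iP e (dd := dd) ≫ rP e cc = 𝟙 _ := by
  apply ModuleCat.hom_ext
  apply LinearMap.ext
  intro x
  apply Hand.val_injective
  show Hand.valHom (∑ i, Hand.mk ((cc i * (1 - e)) * ((1 - e) * (dd i * x.val))) _) =
    Hand.valHom x
  rw [map_sum (Hand.valHom (p := (1 : C)) (q := 1 - e)) _ Finset.univ]
  show (∑ i, (cc i * (1 - e)) * ((1 - e) * (dd i * x.val))) = x.val
  rw [Finset.sum_congr rfl (fun i _ => assoc_key e hcd i x.val), ← Finset.sum_mul, hcd, one_mul]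

variable (m) in
/-- Projection `B^m → B`. -/
noncomputable def projHom (i : Fin m) :
    ModuleCat.of (Hand (1 - e) (1 - e))ᵐᵒᵖ (Fin m → Hand (1 - e) (1 - e)) ⟶
      ModuleCat.of (Hand (1 - e) (1 - e))ᵐᵒᵖ (Hand (1 - e) (1 - e)) :=
  ModuleCat.ofHom (LinearMap.proj i)

variable (m) in
/-- Inclusion `B → B^m`. -/
noncomputable def singleHom (i : Fin m) :
    ModuleCat.of (Hand (1 - e) (1 - e))ᵐᵒᵖ (Hand (1 - e) (1 - e)) ⟶
      ModuleCat.of (Hand (1 - e) (1 - e))ᵐᵒᵖ (Fin m → Hand (1 - e) (1 - e)) :=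
  ModuleCat.ofHom (LinearMap.single (Hand (1 - e) (1 - e))ᵐᵒᵖ (fun _ => Hand (1 - e) (1 - e)) i)

lemma pi_sum_id :
    (∑ i : Fin m, projHom e m i ≫ singleHom e m i) =
    𝟙 (ModuleCat.of (Hand (1 - e) (1 - e))ᵐᵒᵖ (Fin m → Hand (1 - e) (1 - e))) := by
  apply ModuleCat.hom_ext
  apply LinearMap.ext
  intro g
  rw [ModuleCat.hom_sum]
  have h2 := LinearMap.sum_apply (Finset.univ)
    (fun i : Fin m => (projHom e m i ≫ singleHom e m i).hom) g
  rw [h2]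
  show (∑ i : Fin m, Pi.single i (g i)) = g
  exact Finset.univ_sum_single g

end Assemble



end Morita

/-- If the Morita defect `C̄' = C/Ce'C` vanishes (so `B = e'Ce'` and `C`
are Morita equivalent), then the grade of `C̄ = C/CeC` as a right `B`-module equals its
grade as a right `C`-module. -/
theorem grade_of_defect_over_B_eq_grade_over_C
    (C : Type) [Ring C] (e : C) [he : Fact (IsIdempotentElem e)]
    (hC' : Subsingleton (CBar (1 - e))) :
    rgrade (Hand (1 - e) (1 - e)) (CBar e) = rgrade C (CBar e) := by
  obtain ⟨m, cc, dd, hcd⟩ := exists_sum_rep e hC'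
  have main : ∀ n : ℕ,
      Subsingleton (Abelian.Ext (ModuleCat.of (Hand (1 - e) (1 - e))ᵐᵒᵖ (CBar e))
        (ModuleCat.of (Hand (1 - e) (1 - e))ᵐᵒᵖ (Hand (1 - e) (1 - e))) n) ↔
      Subsingleton (Abelian.Ext (ModuleCat.of Cᵐᵒᵖ (CBar e)) (ModuleCat.of Cᵐᵒᵖ C) n) := by
    intro n
    have eqv : Abelian.Ext (ModuleCat.of Cᵐᵒᵖ (CBar e)) (ModuleCat.of Cᵐᵒᵖ C) n ≃
        Abelian.Ext (ModuleCat.of (Hand (1 - e) (1 - e))ᵐᵒᵖ (CBar e))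
          (ModuleCat.of (Hand (1 - e) (1 - e))ᵐᵒᵖ (Hand (1 : C) (1 - e))) n :=
      Abelian.Ext.chgUniv.{1, 0}.trans (((extEquiv (moritaEquiv e hcd) _ _ n).trans
        (extIsoCongr (cbarFixIso e) (cFixIso e) n)).trans Abelian.Ext.chgUniv.{0, 1})
    constructor
    · intro h
      have h1 := subsingleton_ext_of_sum_id
        (X := ModuleCat.of (Hand (1 - e) (1 - e))ᵐᵒᵖ (CBar e))
        (fun i => projHom e m i) (fun i => singleHom e m i) (pi_sum_id e) n (Abelian.Ext.chgUniv.{0, 1}.subsingleton)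
      have h2 := subsingleton_ext_of_retract
        (X := ModuleCat.of (Hand (1 - e) (1 - e))ᵐᵒᵖ (CBar e))
        (iP e (dd := dd)) (rP e cc) (iP_rP e hcd) n h1
      haveI := h2
      exact (eqv.trans Abelian.Ext.chgUniv.{1, 0}).subsingleton
    · intro h
      haveI := h
      have h2 := (eqv.trans Abelian.Ext.chgUniv.{1, 0}).symm.subsingleton
      exact @Equiv.subsingleton _ _ Abelian.Ext.chgUniv.{1, 0} <| subsingleton_ext_of_retract
        (X := ModuleCat.of (Hand (1 - e) (1 - e))ᵐᵒᵖ (CBar e))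
        (iB e) (rB e) (iB_rB e) n h2
  unfold rgrade
  refine congrArg sInf ?_
  ext i
  simp only [Set.mem_setOf_eq]
  constructor
  · rintro ⟨n, rfl, hn⟩
    exact ⟨n, rfl, fun hs => hn ((main n).2 hs)⟩
  · rintro ⟨n, rfl, hn⟩
    exact ⟨n, rfl, fun hs => hn ((main n).1 hs)⟩

end MoritaHochschild
end
end

section
/- Let K be a commutative ring and (C,e) a Morita context such that C is a K-algebra, and set A = eCe. The comparison map χ*_{C/A} : Hoch*(C) → Hoch*(A) on Hochschild cohomology over K, induced by the semi-split inclusion of complexes of C-bimodules Ce ⊗_A 𝔹(A) ⊗_A eC ↪ 𝔹(C) lifting the multiplication map μ_e : Ce ⊗_A eC → C, is a homomorphism of graded K-algebras with respect to the Gerstenhaber (Yoneda) products on source and target. -/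
open CategoryTheory MulOpposite

attribute [local instance] HasDerivedCategory.standard
attribute [local instance] CategoryTheory.hasExt_of_hasDerivedCategory

set_option maxHeartbeats 1000000
set_option synthInstance.maxHeartbeats 400000
set_option linter.unusedSectionVars false
set_option linter.unusedVariables false

noncomputable section
namespace MoritaHochschild

/-! ### Corners `pCq` of a ring with idempotents `p`, `q` -/

variable {C : Type} [Ring C]

/-! ### Hochschild cochains over a commutative base ring `K` (bar-complex description) -/

section HochschildCochains

/-- Merging of consecutive entries: given `a : Fin (n+1) → R` and `i : Fin n`, the
`n`-tuple `(a 0, …, a (i-1), a i * a (i+1), a (i+2), …, a n)`. -/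
def mulConsec {R : Type} [Mul R] {n : ℕ} (a : Fin (n + 1) → R) (i : Fin n) :
    Fin n → R :=
  fun j =>
    if j.1 < i.1 then a (Fin.castSucc j)
    else if j.1 = i.1 then a (Fin.castSucc j) * a j.succ
    else a j.succ

/-- The Hochschild coboundary of an (inhomogeneous) `n`-cochain `f` on `R` with values in
an `R`-bimodule `V`:
`(d f)(a₀, …, aₙ) = a₀ • f(a₁, …, aₙ) + ∑ᵢ (-1)^(i+1) f(a₀, …, aᵢ·aᵢ₊₁, …, aₙ)
  + (-1)^(n+1) f(a₀, …, a_{n-1}) • aₙ`. -/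
def hd {R V : Type} [Ring R] [AddCommGroup V] [SMul R V] [SMul Rᵐᵒᵖ V] {n : ℕ}
    (f : (Fin n → R) → V) : (Fin (n + 1) → R) → V :=
  fun a =>
    a 0 • f (Fin.tail a)
    + (Finset.univ.sum fun i : Fin n => ((-1 : ℤ) ^ (i.1 + 1)) • f (mulConsec a i))
    + ((-1 : ℤ) ^ (n + 1)) • ((MulOpposite.op (a (Fin.last n))) • f (Fin.init a))

/-- `K`-multilinearity of a raw cochain (so that multilinear cochains correspond to
`R^{ev}`-linear maps on the bar resolution `R^{⊗ K (n+2)}`). -/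
def IsMultilinearCochain (K : Type) [CommRing K] {R V : Type} [Ring R] [Module K R]
    [AddCommGroup V] [Module K V] {n : ℕ} (f : (Fin n → R) → V) : Prop :=
  (∀ (a : Fin n → R) (i : Fin n) (x y : R),
      f (Function.update a i (x + y)) = f (Function.update a i x) + f (Function.update a i y))
  ∧ (∀ (a : Fin n → R) (i : Fin n) (k : K) (x : R),
      f (Function.update a i (k • x)) = k • f (Function.update a i x))

/-- A cochain is a coboundary if it is `d` of a multilinear cochain
(in degree `0`, only the zero cochain is a coboundary). -/
def IsCoboundary (K : Type) [CommRing K] {R V : Type} [Ring R] [Module K R]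
    [AddCommGroup V] [Module K V] [SMul R V] [SMul Rᵐᵒᵖ V] :
    ∀ {n : ℕ}, ((Fin n → R) → V) → Prop
  | 0, u => u = 0
  | _ + 1, u => ∃ h, IsMultilinearCochain K h ∧ u = hd h

/-- The cup product of Hochschild cochains (with coefficients in the ring itself). -/
def cup {R : Type} [Ring R] {m n : ℕ} (f : (Fin m → R) → R) (g : (Fin n → R) → R) :
    (Fin (m + n) → R) → R :=
  fun a => f (fun i => a (Fin.castAdd n i)) * g (fun j => a (Fin.natAdd m j))

end HochschildCochains
section Chi

variable {K : Type} [CommRing K] [Algebra K C]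

instance handSMulK {p q : C} : SMul K (Hand p q) :=
  ⟨fun k x => ⟨k • x.val, by rw [mul_smul_comm, smul_mul_assoc, x.prop]⟩⟩

@[simp] lemma Hand.val_smulK {p q : C} (k : K) (x : Hand p q) :
    (k • x : Hand p q).val = k • x.val := rfl

instance handModuleK {p q : C} : Module K (Hand p q) :=
  Function.Injective.module K (Hand.valHom) Hand.val_injective (fun _ _ => rfl)

/-- The comparison map on Hochschild cochains: an `n`-cochain on `C` is compressed to an
`n`-cochain on the corner algebra `A = eCe`, by restricting the arguments to `A` and
compressing the value by `e·(-)·e`. This is the cochain-level description of the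
comparison map `χ_{C/A} : Hoch(C) → Hoch(A)`. -/
def chiCochain (e : C) [Fact (IsIdempotentElem e)] {n : ℕ}
    (f : (Fin n → C) → C) : (Fin n → Hand e e) → Hand e e :=
  fun a => Hand.compress e e (f (fun i => (a i).val))

end Chi


section Helpers

variable {C : Type} [Ring C] {K : Type} [CommRing K] [Algebra K C]
variable {e : C} [he : Fact (IsIdempotentElem e)]

lemma ee : e * e = e := he.out

lemma eu : e * (1 - e) = 0 := by rw [mul_sub, mul_one, ee, sub_self]

lemma ue : (1 - e) * e = 0 := by rw [sub_mul, one_mul, ee, sub_self]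

lemma uu : (1 - e) * (1 - e) = (1 - e) := by
  rw [mul_sub, mul_one, ue, sub_zero]

lemma u_corner (x : Hand e e) : (1 - e) * x.val = 0 := by
  rw [← Hand.left_absorb x, ← mul_assoc, ue, zero_mul]

lemma corner_u (x : Hand e e) : x.val * (1 - e) = 0 := by
  rw [← Hand.right_absorb x, mul_assoc, eu, mul_zero]

@[simp] lemma val_compress' (x : C) : (Hand.compress e e x).val = e * x * e := rfl

@[simp] lemma val_sub' (x y : Hand e e) : (x - y).val = x.val - y.val := rfl

lemma compress_add (x y : C) :
    Hand.compress e e (x + y) = Hand.compress e e x + Hand.compress e e y := by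
  apply Hand.val_injective
  show e * (x + y) * e = e * x * e + e * y * e
  rw [mul_add, add_mul]

lemma compress_smulK (k : K) (x : C) :
    Hand.compress e e (k • x) = k • Hand.compress e e x := by
  apply Hand.val_injective
  show e * (k • x) * e = k • (e * x * e)
  rw [mul_smul_comm, smul_mul_assoc]

lemma compress_zsmul (z : ℤ) (x : C) :
    Hand.compress e e (z • x) = z • Hand.compress e e x := by
  apply Hand.val_injective
  show e * (z • x) * e = z • (e * x * e)
  rw [mul_smul_comm, smul_mul_assoc]

lemma corner_pull_left (v : Hand e e) (X : C) :
    e * (v.val * X) * e = v.val * (e * X * e) := by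
  have h : v.val * X = v.val * (e * X) := by rw [← mul_assoc, Hand.right_absorb]
  rw [← mul_assoc e v.val X, Hand.left_absorb v, h, mul_assoc v.val (e * X) e]

lemma corner_pull_right (v : Hand e e) (X : C) :
    e * (X * v.val) * e = (e * X * e) * v.val := by
  rw [← mul_assoc e X v.val, mul_assoc (e * X) v.val e, Hand.right_absorb v,
    mul_assoc (e * X) e v.val, Hand.left_absorb v]

lemma pull_zsmul (z : ℤ) (X : C) : e * (z • X) * e = z • (e * X * e) := by
  rw [mul_smul_comm, smul_mul_assoc]

lemma val_hd {k : ℕ} (F : (Fin k → Hand e e) → Hand e e) (a : Fin (k+1) → Hand e e) :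
    (hd F a).val = (a 0).val * (F (Fin.tail a)).val
      + (∑ i : Fin k, ((-1 : ℤ) ^ (i.1 + 1)) • (F (mulConsec a i)).val)
      + ((-1 : ℤ) ^ (k + 1)) • ((F (Fin.init a)).val * (a (Fin.last k)).val) := by
  show Hand.valHom (hd F a) = _
  rw [hd, map_add, map_add, map_sum]
  rfl

lemma val_mulConsec {k : ℕ} (a : Fin (k+1) → Hand e e) (i : Fin k) :
    (fun j => ((mulConsec a i) j).val) = mulConsec (fun j => (a j).val) i := by
  funext j
  show Hand.val (if _ then _ else if _ then _ else _) = _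
  unfold mulConsec
  split_ifs <;> rfl

lemma val_update {k : ℕ} (a : Fin k → Hand e e) (i : Fin k) (z : Hand e e) :
    (fun j => ((Function.update a i z) j).val)
      = Function.update (fun j => (a j).val) i z.val := by
  funext j
  simp only [Function.update_apply]
  split_ifs <;> rfl

end Helpers
section Helpers2

variable {C : Type} [Ring C] {K : Type} [CommRing K] [Algebra K C]
variable {e : C} [he : Fact (IsIdempotentElem e)]

lemma chi_multilinear {n : ℕ} (f : (Fin n → C) → C) (hf : IsMultilinearCochain K f) :
    IsMultilinearCochain K (chiCochain e f) := by
  constructor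
  · intro a i x y
    unfold chiCochain
    rw [val_update a i (x + y), val_update a i x, val_update a i y, Hand.val_add,
      hf.1, compress_add]
  · intro a i k x
    unfold chiCochain
    rw [val_update a i (k • x), val_update a i x, Hand.val_smulK, hf.2, compress_smulK]

lemma chi_chain' {n : ℕ} (f : (Fin n → C) → C) :
    chiCochain e (hd f) = hd (chiCochain e f) := by
  funext a
  apply Hand.val_injective
  show e * hd f (fun i => (a i).val) * e = Hand.val (hd (chiCochain e f) a)
  rw [val_hd]
  simp only [hd, smul_eq_mul, MulOpposite.smul_eq_mul_unop, MulOpposite.unop_op]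
  rw [mul_add, mul_add, add_mul, add_mul]
  congr 1
  · congr 1
    · rw [corner_pull_left (a 0)]
      rfl
    · rw [Finset.mul_sum, Finset.sum_mul]
      refine Finset.sum_congr rfl fun i _ => ?_
      rw [pull_zsmul]
      show _ = ((-1:ℤ) ^ (i.1+1)) • (e * f (fun j => ((mulConsec a i) j).val) * e)
      rw [val_mulConsec a i]
  · rw [pull_zsmul, corner_pull_right (a (Fin.last n))]
    rfl

lemma chi_add {n : ℕ} (f g : (Fin n → C) → C) :
    chiCochain e (f + g) = chiCochain e f + chiCochain e g := by
  funext a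
  exact compress_add _ _

lemma chi_smulK {n : ℕ} (k : K) (f : (Fin n → C) → C) :
    chiCochain e (k • f) = k • chiCochain e f := by
  funext a
  exact compress_smulK _ _

lemma chi_one : chiCochain e (fun _ : Fin 0 → C => (1 : C)) = fun _ => (1 : Hand e e) := by
  funext a
  apply Hand.val_injective
  show e * 1 * e = (1 : Hand e e).val
  rw [mul_one, ee, Hand.val_one]

lemma central_of_cocycle (f : (Fin 0 → C) → C) (hdf : hd f = 0) (x : C) (b : Fin 0 → C) :
    x * f b = f b * x := by
  have hsub : ∀ (u v : Fin 0 → C), u = v := fun u v => funext fun i => i.elim0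
  have h := congrFun hdf (fun _ => x)
  simp only [hd, smul_eq_mul, MulOpposite.smul_eq_mul_unop, MulOpposite.unop_op,
    Finset.univ_eq_empty, Finset.sum_empty, add_zero, zero_add, pow_one, neg_smul, one_smul,
    Pi.zero_apply] at h
  rw [hsub (Fin.tail fun _ => x) b, hsub (Fin.init fun _ => x) b] at h
  exact add_neg_eq_zero.mp h

end Helpers2
section Helpers3

variable {α : Type} [Mul α]

lemma mulConsec_apply {k : ℕ} (a : Fin (k+1) → α) (i : Fin k) (j : Fin k) :
    mulConsec a i j =
      if j.1 < i.1 then a j.castSucc else if j.1 = i.1 then a j.castSucc * a j.succ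
      else a j.succ := rfl

lemma tail_snoc {k : ℕ} (b : Fin (k+1) → α) (x : α) :
    Fin.tail ((Fin.snoc b x : Fin (k+2) → α)) = Fin.snoc (Fin.tail b) x := by
  funext j
  induction j using Fin.lastCases with
  | last =>
    simp only [Fin.tail]
    rw [Fin.succ_last, Fin.snoc_last, Fin.snoc_last]
  | cast j' =>
    simp only [Fin.tail]
    rw [Fin.succ_castSucc, Fin.snoc_castSucc, Fin.snoc_castSucc]
    rfl

lemma mulConsec_snoc_castSucc {k : ℕ} (b : Fin (k+1) → α) (x : α) (i : Fin k) :
    mulConsec (Fin.snoc b x) (Fin.castSucc i) = Fin.snoc (mulConsec b i) x := by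
  funext j
  induction j using Fin.lastCases with
  | last =>
    rw [Fin.snoc_last, mulConsec_apply]
    have h1 : ¬ ((Fin.last k).1 < (Fin.castSucc i).1) := by
      rw [Fin.val_last, Fin.coe_castSucc]; omega
    have h2 : ¬ ((Fin.last k).1 = (Fin.castSucc i).1) := by
      rw [Fin.val_last, Fin.coe_castSucc]; omega
    rw [if_neg h1, if_neg h2, Fin.succ_last, Fin.snoc_last]
  | cast j' =>
    rw [Fin.snoc_castSucc, mulConsec_apply, mulConsec_apply]
    simp only [Fin.coe_castSucc]
    by_cases h1 : j'.1 < i.1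
    · rw [if_pos h1, if_pos h1, Fin.snoc_castSucc]
    · rw [if_neg h1, if_neg h1]
      by_cases h2 : j'.1 = i.1
      · rw [if_pos h2, if_pos h2, Fin.snoc_castSucc, Fin.succ_castSucc, Fin.snoc_castSucc]
      · rw [if_neg h2, if_neg h2, Fin.succ_castSucc, Fin.snoc_castSucc]

lemma mulConsec_snoc_last {k : ℕ} (b : Fin (k+1) → α) (x : α)
    (hb : b (Fin.last k) * x = b (Fin.last k)) :
    mulConsec (Fin.snoc b x) (Fin.last k) = b := by
  funext j
  rw [mulConsec_apply]
  induction j using Fin.lastCases with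
  | last =>
    have h1 : ¬ ((Fin.last k).1 < (Fin.last k).1) := lt_irrefl _
    rw [if_neg h1, if_pos rfl, Fin.snoc_castSucc, Fin.succ_last, Fin.snoc_last, hb]
  | cast j' =>
    have h1 : (Fin.castSucc j').1 < (Fin.last k).1 := j'.2
    rw [if_pos h1, Fin.snoc_castSucc]

lemma neg_one_pow_add_self (m x : ℕ) : ((-1:ℤ)^(m+x)) * (-1:ℤ)^m = (-1:ℤ)^x := by
  rw [← pow_add]
  have h : m + x + m = 2*m + x := by ring
  rw [h, pow_add, pow_mul, neg_one_sq, one_pow, one_mul]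

lemma neg_one_pow_mul_succ (m : ℕ) : ((-1:ℤ)^m) * (-1:ℤ)^(m+1) = -1 := by
  rw [← pow_add]
  exact Odd.neg_one_pow ⟨m, by ring⟩

end Helpers3
section Helpers4

variable {C : Type} [Ring C] {K : Type} [CommRing K] [Algebra K C]
variable {e : C} [he : Fact (IsIdempotentElem e)]

lemma e_mul_corner {x : C} (hx : e * x * e = x) : e * x = x := by
  conv_lhs => rw [← hx]
  rw [← mul_assoc, ← mul_assoc, ee, hx]

lemma corner_mul_e {x : C} (hx : e * x * e = x) : x * e = x := by
  conv_lhs => rw [← hx]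
  rw [mul_assoc (e*x) e e, ee, hx]

lemma corner_mul_u {x : C} (hx : e * x * e = x) : x * (1 - e) = 0 := by
  rw [mul_sub, mul_one, corner_mul_e hx, sub_self]

lemma u_mul_corner {x : C} (hx : e * x * e = x) : (1 - e) * x = 0 := by
  rw [sub_mul, one_mul, e_mul_corner hx, sub_self]

lemma pull_zsmul_ue (z : ℤ) (X : C) :
    (1 - e) * (z • X) * e = z • ((1 - e) * X * e) := by
  rw [mul_smul_comm, smul_mul_assoc]

lemma pull_zsmul_eu (z : ℤ) (X : C) :
    e * (z • X) * (1 - e) = z • (e * X * (1 - e)) := by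
  rw [mul_smul_comm, smul_mul_assoc]

lemma pull_left_eu {x : C} (hx : e * x * e = x) (X : C) :
    e * (x * X) * (1 - e) = x * (e * X * (1 - e)) := by
  rw [← mul_assoc, e_mul_corner hx, ← mul_assoc x (e * X) (1-e), ← mul_assoc x e X,
    corner_mul_e hx]

lemma g_side {n' : ℕ} (g : (Fin (n'+1) → C) → C) (hdg : hd g = 0)
    (B : Fin (n'+1+1) → C) (hB : ∀ t, e * B t * e = B t) :
    B 0 * ((1-e) * g (Fin.tail B) * e)
      + (∑ j : Fin (n'+1), ((-1:ℤ)^(j.1+1)) • ((1-e) * g (mulConsec B j) * e))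
      + ((-1:ℤ)^(n'+1+1)) • (((1-e) * g (Fin.init B) * e) * B (Fin.last (n'+1))) = 0 := by
  have h0 : hd g B = 0 := by rw [hdg]; rfl
  have key : B 0 * ((1-e) * g (Fin.tail B) * e)
      + (∑ j : Fin (n'+1), ((-1:ℤ)^(j.1+1)) • ((1-e) * g (mulConsec B j) * e))
      + ((-1:ℤ)^(n'+1+1)) • (((1-e) * g (Fin.init B) * e) * B (Fin.last (n'+1)))
      = (1-e) * (B 0 * g (Fin.tail B)
        + (∑ j : Fin (n'+1), ((-1:ℤ)^(j.1+1)) • g (mulConsec B j))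
        + ((-1:ℤ)^(n'+1+1)) • (g (Fin.init B) * B (Fin.last (n'+1)))) * e := by
    rw [mul_add, mul_add, add_mul, add_mul, Finset.mul_sum, Finset.sum_mul]
    congr 1
    · congr 1
      · rw [← mul_assoc (B 0) ((1-e) * g (Fin.tail B)) e,
          ← mul_assoc (B 0) (1-e) (g (Fin.tail B)), corner_mul_u (hB 0), zero_mul, zero_mul,
          ← mul_assoc (1-e) (B 0) (g (Fin.tail B)), u_mul_corner (hB 0), zero_mul, zero_mul]
      · refine Finset.sum_congr rfl fun j _ => ?_
        rw [pull_zsmul_ue]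
    · rw [pull_zsmul_ue]
      congr 1
      rw [← mul_assoc (1-e) (g (Fin.init B)) (B (Fin.last (n'+1))),
        mul_assoc ((1-e) * g (Fin.init B)) (B (Fin.last (n'+1))) e,
        corner_mul_e (hB (Fin.last (n'+1))),
        mul_assoc ((1-e) * g (Fin.init B)) e (B (Fin.last (n'+1))),
        e_mul_corner (hB (Fin.last (n'+1)))]
  rw [key]
  show (1-e) * hd g B * e = 0
  rw [h0, mul_zero, zero_mul]

lemma f_side {m' : ℕ} (f : (Fin (m'+1) → C) → C) (hdf : hd f = 0)
    (b : Fin (m'+1) → C) (hb : ∀ t, e * b t * e = b t) :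
    e * f b * (1-e) = ((-1:ℤ)^m') • ( b 0 * (e * f (Fin.snoc (Fin.tail b) e) * (1-e))
      + ∑ i : Fin m', ((-1:ℤ)^(i.1+1)) • (e * f (Fin.snoc (mulConsec b i) e) * (1-e)) ) := by
  have h0 : hd f (Fin.snoc b e) = 0 := by rw [hdf]; rfl
  have h2 : e * hd f (Fin.snoc b e) * (1-e) = 0 := by rw [h0, mul_zero, zero_mul]
  simp only [hd, smul_eq_mul, MulOpposite.smul_eq_mul_unop, MulOpposite.unop_op] at h2
  rw [tail_snoc, Fin.init_snoc, Fin.snoc_last] at h2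
  have hz : Fin.snoc (α := fun _ => C) b e 0 = b 0 := by
    have h00 : (0 : Fin (m'+2)) = Fin.castSucc 0 := rfl
    rw [h00, Fin.snoc_castSucc]
  rw [hz, Fin.sum_univ_castSucc] at h2
  simp only [Fin.coe_castSucc, Fin.val_last] at h2
  rw [mulConsec_snoc_last b e (corner_mul_e (hb (Fin.last m')))] at h2
  have hrw : ∀ i : Fin m',
      mulConsec (Fin.snoc b e) (Fin.castSucc i) = Fin.snoc (mulConsec b i) e :=
    fun i => mulConsec_snoc_castSucc b e i
  simp only [hrw] at h2
  simp only [mul_add, add_mul, Finset.mul_sum, Finset.sum_mul] at h2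
  rw [pull_left_eu (hb 0)] at h2
  have hT3 : e * ((-1:ℤ)^(m'+1+1) • (f b * e)) * (1-e) = 0 := by
    rw [pull_zsmul_eu, ← mul_assoc e (f b) e, mul_assoc (e * f b) e (1-e), eu, mul_zero,
      smul_zero]
  rw [hT3, add_zero] at h2
  rw [pull_zsmul_eu] at h2
  have hsum : ∀ i : Fin m', e * ((-1:ℤ)^(i.1+1) • f (Fin.snoc (mulConsec b i) e)) * (1-e)
      = ((-1:ℤ)^(i.1+1)) • (e * f (Fin.snoc (mulConsec b i) e) * (1-e)) :=
    fun i => pull_zsmul_eu _ _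
  simp only [hsum] at h2
  -- h2 : b0 * (e f(snoc tail b) u) + (∑ ... + (-1)^(m'+1) • (e f b u)) = 0 (shape?)
  rw [← add_assoc] at h2
  have h4 := eq_neg_of_add_eq_zero_right h2
  have heven : ((-1:ℤ)^(m'+1)) * ((-1:ℤ)^(m'+1)) = 1 := by
    rw [← pow_add]
    exact Even.neg_one_pow ⟨m'+1, by ring⟩
  have h5 := congrArg (fun t => ((-1:ℤ)^(m'+1)) • t) h4
  simp only [smul_smul, smul_neg] at h5
  rw [heven, one_smul] at h5
  rw [h5, ← neg_smul]
  congr 1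
  rw [pow_succ]
  ring

end Helpers4
section Helpers5

variable {C : Type} [Ring C] {K : Type} [CommRing K] [Algebra K C]
variable {e : C} [he : Fact (IsIdempotentElem e)]

lemma aval_congr {M : ℕ} (a : Fin M → Hand e e) {x y : Fin M} (h : x.1 = y.1) :
    (a x).val = (a y).val :=
  congrArg (fun t => (a t).val) (Fin.ext h)

/-- First-block tuple (with `e` appended) fed to `f` in the homotopy. -/
def tplF (e : C) {m' n' : ℕ} (c : Fin (m'+1+n') → Hand e e) : Fin (m'+1) → C :=
  Fin.snoc (fun i : Fin m' => (c ⟨i.1, by omega⟩).val) e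

/-- Second-block tuple fed to `g` in the homotopy. -/
def tplG (e : C) {m' n' : ℕ} (c : Fin (m'+1+n') → Hand e e) : Fin (n'+1) → C :=
  fun j => (c ⟨m' + j.1, by omega⟩).val

/-- The cochain homotopy witnessing multiplicativity of `χ` up to coboundary. -/
def homotopyAux (e : C) [Fact (IsIdempotentElem e)] {m' n' : ℕ}
    (f : (Fin (m'+1) → C) → C) (g : (Fin (n'+1) → C) → C)
    (c : Fin (m'+1+n') → Hand e e) : Hand e e :=
  ((-1:ℤ)^m') • Hand.compress e e
    ((e * f (tplF e c) * (1-e)) * ((1-e) * g (tplG e c) * e))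

lemma sandwich (X Y : C) :
    e * ((e * X * (1-e)) * ((1-e) * Y * e)) * e = (e * X * (1-e)) * ((1-e) * Y * e) := by
  have h1 : e * (e * X * (1-e)) = e * X * (1-e) := by
    rw [← mul_assoc, ← mul_assoc, ee]
  have h2 : ((1-e) * Y * e) * e = (1-e) * Y * e := by
    rw [mul_assoc ((1-e) * Y) e e, ee]
  rw [← mul_assoc e (e * X * (1-e)) ((1-e) * Y * e), h1,
    mul_assoc (e * X * (1-e)) ((1-e) * Y * e) e, h2]

lemma homotopyAux_val {m' n' : ℕ}
    (f : (Fin (m'+1) → C) → C) (g : (Fin (n'+1) → C) → C)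
    (c : Fin (m'+1+n') → Hand e e) :
    (homotopyAux e f g c).val
      = ((-1:ℤ)^m') • ((e * f (tplF e c) * (1-e)) * ((1-e) * g (tplG e c) * e)) := by
  show ((-1:ℤ)^m' • Hand.compress e e _).val = _
  rw [show ∀ (z : ℤ) (x : Hand e e), (z • x).val = z • x.val from fun _ _ => rfl]
  rw [val_compress', sandwich]

end Helpers5
section Helpers6

variable {C : Type} [Ring C] {K : Type} [CommRing K] [Algebra K C]
variable {e : C} [he : Fact (IsIdempotentElem e)]

def tupA1 (e : C) {m' n' : ℕ} (a : Fin (m'+1+n'+1) → Hand e e) : Fin (m'+1) → C :=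
  fun i => (a (Fin.castAdd (n'+1) i)).val

def tupA2 (e : C) {m' n' : ℕ} (a : Fin (m'+1+n'+1) → Hand e e) : Fin (n'+1) → C :=
  fun j => (a (Fin.natAdd (m'+1) j)).val

def tupB (e : C) {m' n' : ℕ} (a : Fin (m'+1+n'+1) → Hand e e) : Fin (n'+1+1) → C :=
  fun t => (a ⟨m' + t.1, by omega⟩).val

variable {m' n' : ℕ} (a : Fin (m'+1+n'+1) → Hand e e)

lemma tupL1 : tplF e (Fin.tail a) = Fin.snoc (Fin.tail (tupA1 e a)) e := by
  unfold tplF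
  congr 1
  all_goals
  funext k
  simp only [Fin.tail, tupA1]
  exact aval_congr a (by
    (try simp only [Fin.val_mk, Fin.coe_castSucc, Fin.val_succ, Fin.coe_castAdd,
      Fin.coe_natAdd, Fin.val_last, Fin.val_zero]) <;> omega)

lemma tupL2 : tplG e (Fin.tail a) = tupA2 e a := by
  funext j
  simp only [tplG, tupA2, Fin.tail]
  exact aval_congr a (by
    (try simp only [Fin.val_mk, Fin.coe_castSucc, Fin.val_succ, Fin.coe_castAdd,
      Fin.coe_natAdd, Fin.val_last, Fin.val_zero]) <;> omega)

lemma tupL7 : tplF e (Fin.init a) = Fin.snoc (Fin.init (tupA1 e a)) e := by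
  unfold tplF
  congr 1
  all_goals
  funext k
  simp only [Fin.init, tupA1]
  exact aval_congr a (by
    (try simp only [Fin.val_mk, Fin.coe_castSucc, Fin.val_succ, Fin.coe_castAdd,
      Fin.coe_natAdd, Fin.val_last, Fin.val_zero]) <;> omega)

lemma tupL8 : tplG e (Fin.init a) = Fin.init (tupB e a) := by
  funext j
  simp only [tplG, tupB, Fin.init]
  exact aval_congr a (by
    (try simp only [Fin.val_mk, Fin.coe_castSucc, Fin.val_succ, Fin.coe_castAdd,
      Fin.coe_natAdd, Fin.val_last, Fin.val_zero]) <;> omega)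

lemma tupL9 : (a (Fin.last (m'+1+n'))).val = tupB e a (Fin.last (n'+1)) := by
  simp only [tupB]
  exact aval_congr a (by
    (try simp only [Fin.val_mk, Fin.coe_castSucc, Fin.val_succ, Fin.coe_castAdd,
      Fin.coe_natAdd, Fin.val_last, Fin.val_zero]) <;> omega)

lemma tupL10 : (a 0).val = tupA1 e a 0 := by
  simp only [tupA1]
  exact aval_congr a (by
    (try simp only [Fin.val_mk, Fin.coe_castSucc, Fin.val_succ, Fin.coe_castAdd,
      Fin.coe_natAdd, Fin.val_last, Fin.val_zero]) <;> omega)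

lemma tupB0 : tupB e a 0 = tupA1 e a (Fin.last m') := by
  simp only [tupB, tupA1]
  exact aval_congr a (by
    (try simp only [Fin.val_mk, Fin.coe_castSucc, Fin.val_succ, Fin.coe_castAdd,
      Fin.coe_natAdd, Fin.val_last, Fin.val_zero]) <;> omega)

end Helpers6
section Helpers7

variable {C : Type} [Ring C] {K : Type} [CommRing K] [Algebra K C]
variable {e : C} [he : Fact (IsIdempotentElem e)]
variable {m' n' : ℕ} (a : Fin (m'+1+n'+1) → Hand e e)

lemma tupL3 (i : Fin (m'+1+n')) (i' : Fin m') (hii : i.1 = i'.1) :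
    tplF e (mulConsec a i) = Fin.snoc (mulConsec (tupA1 e a) i') e := by
  unfold tplF
  funext k
  induction k using Fin.lastCases with
  | last => rw [Fin.snoc_last, Fin.snoc_last]
  | cast k =>
  rw [Fin.snoc_castSucc, Fin.snoc_castSucc]
  have hk := k.isLt
  have hi' := i'.isLt
  rw [mulConsec_apply, mulConsec_apply]
  simp only [tupA1, Fin.val_mk, Fin.coe_castSucc, Fin.val_succ, Fin.coe_castAdd,
    Fin.coe_natAdd, Fin.val_last, Fin.val_zero]
  split_ifs <;>
    first
      | omega
      | (rw [Hand.val_mul]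
         exact congrArg₂ (· * ·)
           (aval_congr a (by (try simp only [Fin.val_mk, Fin.coe_castSucc, Fin.val_succ,
              Fin.coe_castAdd, Fin.coe_natAdd, Fin.val_last, Fin.val_zero]) <;> omega))
           (aval_congr a (by (try simp only [Fin.val_mk, Fin.coe_castSucc, Fin.val_succ,
              Fin.coe_castAdd, Fin.coe_natAdd, Fin.val_last, Fin.val_zero]) <;> omega)))
      | exact aval_congr a (by (try simp only [Fin.val_mk, Fin.coe_castSucc, Fin.val_succ,
          Fin.coe_castAdd, Fin.coe_natAdd, Fin.val_last, Fin.val_zero]) <;> omega)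

lemma tupL4 (i : Fin (m'+1+n')) (i' : Fin m') (hii : i.1 = i'.1) :
    tplG e (mulConsec a i) = tupA2 e a := by
  funext j
  have hj := j.isLt
  have hi' := i'.isLt
  simp only [tplG, tupA2]
  rw [mulConsec_apply]
  simp only [Fin.val_mk, Fin.coe_castSucc, Fin.val_succ, Fin.coe_castAdd,
    Fin.coe_natAdd, Fin.val_last, Fin.val_zero]
  split_ifs <;>
    first
      | omega
      | exact aval_congr a (by (try simp only [Fin.val_mk, Fin.coe_castSucc, Fin.val_succ,
          Fin.coe_castAdd, Fin.coe_natAdd, Fin.val_last, Fin.val_zero]) <;> omega)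

lemma tupL5 (i : Fin (m'+1+n')) (j' : Fin (n'+1)) (hii : i.1 = m' + j'.1) :
    tplF e (mulConsec a i) = Fin.snoc (Fin.init (tupA1 e a)) e := by
  unfold tplF
  funext k
  induction k using Fin.lastCases with
  | last => rw [Fin.snoc_last, Fin.snoc_last]
  | cast k =>
  rw [Fin.snoc_castSucc, Fin.snoc_castSucc]
  have hk := k.isLt
  rw [mulConsec_apply]
  simp only [tupA1, Fin.init, Fin.val_mk, Fin.coe_castSucc, Fin.val_succ, Fin.coe_castAdd,
    Fin.coe_natAdd, Fin.val_last, Fin.val_zero]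
  split_ifs <;>
    first
      | omega
      | exact aval_congr a (by (try simp only [Fin.val_mk, Fin.coe_castSucc, Fin.val_succ,
          Fin.coe_castAdd, Fin.coe_natAdd, Fin.val_last, Fin.val_zero]) <;> omega)

lemma tupL6 (i : Fin (m'+1+n')) (j' : Fin (n'+1)) (hii : i.1 = m' + j'.1) :
    tplG e (mulConsec a i) = mulConsec (tupB e a) j' := by
  funext j
  have hj := j.isLt
  have hj' := j'.isLt
  simp only [tplG, tupB]
  rw [mulConsec_apply, mulConsec_apply]
  simp only [tupB, Fin.val_mk, Fin.coe_castSucc, Fin.val_succ, Fin.coe_castAdd,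
    Fin.coe_natAdd, Fin.val_last, Fin.val_zero]
  split_ifs <;>
    first
      | omega
      | (rw [Hand.val_mul]
         exact congrArg₂ (· * ·)
           (aval_congr a (by (try simp only [Fin.val_mk, Fin.coe_castSucc, Fin.val_succ,
              Fin.coe_castAdd, Fin.coe_natAdd, Fin.val_last, Fin.val_zero]) <;> omega))
           (aval_congr a (by (try simp only [Fin.val_mk, Fin.coe_castSucc, Fin.val_succ,
              Fin.coe_castAdd, Fin.coe_natAdd, Fin.val_last, Fin.val_zero]) <;> omega)))
      | exact aval_congr a (by (try simp only [Fin.val_mk, Fin.coe_castSucc, Fin.val_succ,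
          Fin.coe_castAdd, Fin.coe_natAdd, Fin.val_last, Fin.val_zero]) <;> omega)

end Helpers7
section Helpers8

variable {C : Type} [Ring C] {K : Type} [CommRing K] [Algebra K C]
variable {e : C} [he : Fact (IsIdempotentElem e)]

lemma main_identity {m' n' : ℕ} (f : (Fin (m'+1) → C) → C) (g : (Fin (n'+1) → C) → C)
    (hdf : hd f = 0) (hdg : hd g = 0) (a : Fin (m'+1+n'+1) → Hand e e) :
    (hd (homotopyAux e f g) a).val
      = (e * f (tupA1 e a) * (1-e)) * ((1-e) * g (tupA2 e a) * e) := by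
  have hc : m' + (n'+1) = m'+1+n' := by omega
  have hcornA1 : ∀ t, e * tupA1 e a t * e = tupA1 e a t := fun t => (a _).prop
  have hcornB : ∀ t, e * tupB e a t * e = tupB e a t := fun t => (a _).prop
  have hsplit : (∑ i : Fin (m'+1+n'), ((-1:ℤ)^(i.1+1)) • (homotopyAux e f g (mulConsec a i)).val)
      = (∑ i' : Fin m', ((-1:ℤ)^(i'.1+1)) • (homotopyAux e f g (mulConsec a ⟨i'.1, by omega⟩)).val)
      + (∑ j' : Fin (n'+1), ((-1:ℤ)^(m'+j'.1+1)) • (homotopyAux e f g (mulConsec a ⟨m'+j'.1, by omega⟩)).val) := by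
    have hsp1 : (∑ i : Fin (m'+1+n'), ((-1:ℤ)^(i.1+1)) • (homotopyAux e f g (mulConsec a i)).val)
        = ∑ i : Fin (m'+(n'+1)), ((-1:ℤ)^((finCongr hc i).1+1)) • (homotopyAux e f g (mulConsec a (finCongr hc i))).val :=
      (Fintype.sum_equiv (finCongr hc) _ _ (fun i => rfl)).symm
    rw [hsp1, Fin.sum_univ_add]
    rfl
  rw [val_hd, hsplit]
  rw [homotopyAux_val f g (Fin.tail a), homotopyAux_val f g (Fin.init a)]
  rw [tupL1 a, tupL2 a, tupL7 a, tupL8 a, tupL9 a, tupL10 a]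
  have hS1 : (∑ i' : Fin m', ((-1:ℤ)^(i'.1+1)) • (homotopyAux e f g (mulConsec a ⟨i'.1, by omega⟩)).val)
      = ∑ i' : Fin m', ((-1:ℤ)^m') • ((((-1:ℤ)^(i'.1+1)) • (e * f (Fin.snoc (mulConsec (tupA1 e a) i') e) * (1-e))) * ((1-e) * g (tupA2 e a) * e)) := by
    refine Finset.sum_congr rfl fun i' _ => ?_
    rw [homotopyAux_val, tupL3 a ⟨i'.1, by omega⟩ i' rfl, tupL4 a ⟨i'.1, by omega⟩ i' rfl]
    rw [smul_smul, mul_comm ((-1:ℤ)^(i'.1+1)) ((-1:ℤ)^m'), ← smul_smul, ← smul_mul_assoc]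
  have hS2 : (∑ j' : Fin (n'+1), ((-1:ℤ)^(m'+j'.1+1)) • (homotopyAux e f g (mulConsec a ⟨m'+j'.1, by omega⟩)).val)
      = ∑ j' : Fin (n'+1), (e * f (Fin.snoc (Fin.init (tupA1 e a)) e) * (1-e))
          * (((-1:ℤ)^(j'.1+1)) • ((1-e) * g (mulConsec (tupB e a) j') * e)) := by
    refine Finset.sum_congr rfl fun j' _ => ?_
    rw [homotopyAux_val, tupL5 a ⟨m'+j'.1, by omega⟩ j' rfl, tupL6 a ⟨m'+j'.1, by omega⟩ j' rfl]
    rw [smul_smul,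
      show ((-1:ℤ)^(m'+j'.1+1)) * ((-1:ℤ)^m') = (-1:ℤ)^(j'.1+1) from
        neg_one_pow_add_self m' (j'.1+1),
      ← mul_smul_comm]
  rw [hS1, hS2]
  rw [← Finset.smul_sum, ← Finset.sum_mul, ← Finset.mul_sum]
  rw [mul_smul_comm ((-1:ℤ)^m') (tupA1 e a 0), ← mul_assoc (tupA1 e a 0)]
  -- T3 conversion
  rw [smul_mul_assoc ((-1:ℤ)^m'), smul_smul,
    show ((-1:ℤ)^(m'+1+n'+1)) * ((-1:ℤ)^m') = (-1:ℤ)^(n'+1+1) from by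
      rw [show m'+1+n'+1 = m'+(n'+1+1) from by omega]
      exact neg_one_pow_add_self m' (n'+1+1),
    mul_assoc (e * f (Fin.snoc (Fin.init (tupA1 e a)) e) * (1-e)),
    ← mul_smul_comm ((-1:ℤ)^(n'+1+1)) (e * f (Fin.snoc (Fin.init (tupA1 e a)) e) * (1-e))]
  -- now regroup and finish
  have grpA : ((-1:ℤ)^m') • ((tupA1 e a 0 * (e * f (Fin.snoc (Fin.tail (tupA1 e a)) e) * (1-e))) * ((1-e) * g (tupA2 e a) * e))
      + ((-1:ℤ)^m') • ((∑ i' : Fin m', ((-1:ℤ)^(i'.1+1)) • (e * f (Fin.snoc (mulConsec (tupA1 e a) i') e) * (1-e))) * ((1-e) * g (tupA2 e a) * e))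
      = (e * f (tupA1 e a) * (1-e)) * ((1-e) * g (tupA2 e a) * e) := by
    rw [← smul_add, ← add_mul, ← smul_mul_assoc, ← f_side f hdf (tupA1 e a) hcornA1]
  have hW : (∑ j' : Fin (n'+1), ((-1:ℤ)^(j'.1+1)) • ((1-e) * g (mulConsec (tupB e a) j') * e))
      + ((-1:ℤ)^(n'+1+1)) • (((1-e) * g (Fin.init (tupB e a)) * e) * tupB e a (Fin.last (n'+1)))
      = -(tupB e a 0 * ((1-e) * g (Fin.tail (tupB e a)) * e)) := by
    have hgs := g_side g hdg (tupB e a) hcornB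
    rw [add_assoc] at hgs
    exact eq_neg_of_add_eq_zero_right hgs
  have grpB : (e * f (Fin.snoc (Fin.init (tupA1 e a)) e) * (1-e))
        * (∑ j' : Fin (n'+1), ((-1:ℤ)^(j'.1+1)) • ((1-e) * g (mulConsec (tupB e a) j') * e))
      + (e * f (Fin.snoc (Fin.init (tupA1 e a)) e) * (1-e))
        * (((-1:ℤ)^(n'+1+1)) • (((1-e) * g (Fin.init (tupB e a)) * e) * tupB e a (Fin.last (n'+1))))
      = 0 := by
    rw [← mul_add, hW, mul_neg, neg_eq_zero, ← mul_assoc,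
      mul_assoc (e * f (Fin.snoc (Fin.init (tupA1 e a)) e)) (1-e) (tupB e a 0),
      u_mul_corner (hcornB 0), mul_zero, zero_mul]
  have reassoc : ∀ (p q r s : C), p + (q + r) + s = (p + q) + (r + s) := fun p q r s => by
    rw [← add_assoc p q r, add_assoc (p+q) r s]
  rw [reassoc, grpA, grpB, add_zero]

end Helpers8
section Helpers9

variable {C : Type} [Ring C] {K : Type} [CommRing K] [Algebra K C]
variable {e : C} [he : Fact (IsIdempotentElem e)]
variable {m' n' : ℕ}

lemma tplF_update_lo (c : Fin (m'+1+n') → Hand e e) (i : Fin (m'+1+n')) (i' : Fin (m'+1))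
    (hii : i.1 = i'.1) (hlt : i'.1 < m') (z : Hand e e) :
    tplF e (Function.update c i z) = Function.update (tplF e c) i' z.val := by
  unfold tplF
  funext k
  induction k using Fin.lastCases with
  | last =>
    rw [Function.update_of_ne (Fin.ne_of_val_ne (by simp only [Fin.val_last]; omega)),
      Fin.snoc_last, Fin.snoc_last]
  | cast k =>
    rw [Fin.snoc_castSucc, Function.update_apply, Function.update_apply, apply_ite Hand.val,
      Fin.snoc_castSucc]
    simp only [Fin.ext_iff, Fin.val_mk, Fin.coe_castSucc]
    split_ifs <;> first | rfl | omega

lemma tplF_update_hi (c : Fin (m'+1+n') → Hand e e) (i : Fin (m'+1+n'))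
    (hge : m' ≤ i.1) (z : Hand e e) :
    tplF e (Function.update c i z) = tplF e c := by
  unfold tplF
  funext k
  induction k using Fin.lastCases with
  | last => rw [Fin.snoc_last, Fin.snoc_last]
  | cast k =>
    have hk := k.isLt
    rw [Fin.snoc_castSucc, Fin.snoc_castSucc, Function.update_apply, apply_ite Hand.val]
    simp only [Fin.ext_iff, Fin.val_mk]
    rw [if_neg (by omega)]

lemma tplG_update_hi (c : Fin (m'+1+n') → Hand e e) (i : Fin (m'+1+n')) (j' : Fin (n'+1))
    (hii : i.1 = m' + j'.1) (z : Hand e e) :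
    tplG e (Function.update c i z) = Function.update (tplG e c) j' z.val := by
  unfold tplG
  funext j
  rw [Function.update_apply, Function.update_apply, apply_ite Hand.val]
  simp only [Fin.ext_iff, Fin.val_mk]
  split_ifs <;> first | rfl | omega

lemma tplG_update_lo (c : Fin (m'+1+n') → Hand e e) (i : Fin (m'+1+n'))
    (hlt : i.1 < m') (z : Hand e e) :
    tplG e (Function.update c i z) = tplG e c := by
  unfold tplG
  funext j
  rw [Function.update_apply, apply_ite Hand.val]
  simp only [Fin.ext_iff, Fin.val_mk]
  rw [if_neg (by omega)]

lemma pull_ksmul (k : K) (X : C) : e * (k • X) * (1-e) = k • (e * X * (1-e)) := by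
  rw [mul_smul_comm, smul_mul_assoc]

lemma homotopyAux_multilinear (f : (Fin (m'+1) → C) → C) (g : (Fin (n'+1) → C) → C)
    (hf : IsMultilinearCochain K f) (hg : IsMultilinearCochain K g) :
    IsMultilinearCochain K (homotopyAux e f g) := by
  constructor
  · intro c i x y
    unfold homotopyAux
    by_cases hi : i.1 < m'
    · rw [tplF_update_lo c i ⟨i.1, by omega⟩ rfl hi (x+y),
        tplF_update_lo c i ⟨i.1, by omega⟩ rfl hi x,
        tplF_update_lo c i ⟨i.1, by omega⟩ rfl hi y,
        tplG_update_lo c i hi (x+y), tplG_update_lo c i hi x, tplG_update_lo c i hi y,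
        Hand.val_add, hf.1, mul_add, add_mul, add_mul, compress_add, smul_add]
    · rw [tplF_update_hi c i (by omega) (x+y), tplF_update_hi c i (by omega) x,
        tplF_update_hi c i (by omega) y,
        tplG_update_hi c i ⟨i.1 - m', by omega⟩ (by simp only [Fin.val_mk]; omega) (x+y),
        tplG_update_hi c i ⟨i.1 - m', by omega⟩ (by simp only [Fin.val_mk]; omega) x,
        tplG_update_hi c i ⟨i.1 - m', by omega⟩ (by simp only [Fin.val_mk]; omega) y,
        Hand.val_add, hg.1, mul_add, add_mul, mul_add, compress_add, smul_add]
  · intro c i k x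
    unfold homotopyAux
    by_cases hi : i.1 < m'
    · rw [tplF_update_lo c i ⟨i.1, by omega⟩ rfl hi (k • x),
        tplF_update_lo c i ⟨i.1, by omega⟩ rfl hi x,
        tplG_update_lo c i hi (k • x), tplG_update_lo c i hi x,
        Hand.val_smulK, hf.2, pull_ksmul, smul_mul_assoc, compress_smulK, smul_comm]
    · rw [tplF_update_hi c i (by omega) (k • x), tplF_update_hi c i (by omega) x,
        tplG_update_hi c i ⟨i.1 - m', by omega⟩ (by simp only [Fin.val_mk]; omega) (k • x),
        tplG_update_hi c i ⟨i.1 - m', by omega⟩ (by simp only [Fin.val_mk]; omega) x,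
        Hand.val_smulK, hg.2]
      rw [show (1-e) * (k • g (Function.update (tplG e c) ⟨i.1 - m', by omega⟩ x.val)) * e
            = k • ((1-e) * g (Function.update (tplG e c) ⟨i.1 - m', by omega⟩ x.val) * e) from by
          rw [mul_smul_comm, smul_mul_assoc],
        mul_smul_comm, compress_smulK, smul_comm]

end Helpers9
section Helpers10

variable {C : Type} [Ring C] {K : Type} [CommRing K] [Algebra K C]
variable {e : C} [he : Fact (IsIdempotentElem e)]

lemma hee2 : ∀ X : C, e * (e * X) = e * X := fun X => by rw [← mul_assoc, ee]

lemma diff_identity (X Y : C) :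
    e * (X * Y) * e - (e * X * e) * (e * Y * e)
      = (e * X * (1-e)) * ((1-e) * Y * e) := by
  simp only [mul_sub, sub_mul, mul_one, one_mul, mul_assoc, hee2]
  abel

lemma D_val {m' n' : ℕ} (f : (Fin (m'+1) → C) → C) (g : (Fin (n'+1) → C) → C)
    (a : Fin (m'+1+n'+1) → Hand e e) :
    ((chiCochain e (cup f g) - cup (chiCochain e f) (chiCochain e g)) a).val
      = (e * f (tupA1 e a) * (1-e)) * ((1-e) * g (tupA2 e a) * e) := by
  rw [← diff_identity]
  rfl

lemma hd_zero {n : ℕ} : hd (0 : (Fin n → Hand e e) → Hand e e) = 0 := by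
  funext a; simp [hd]

lemma multilinear_zero {n : ℕ} :
    IsMultilinearCochain K (0 : (Fin n → Hand e e) → Hand e e) := by
  constructor
  · intro a i x y; simp
  · intro a i k x; simp

lemma main_case {m' n' : ℕ} (f : (Fin (m'+1) → C) → C) (g : (Fin (n'+1) → C) → C)
    (hf : IsMultilinearCochain K f) (hg : IsMultilinearCochain K g)
    (hdf : hd f = 0) (hdg : hd g = 0) :
    ∃ h : (Fin (m'+1+n') → Hand e e) → Hand e e, IsMultilinearCochain K h ∧
      chiCochain e (cup f g) - cup (chiCochain e f) (chiCochain e g) = hd h := by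
  refine ⟨homotopyAux e f g, homotopyAux_multilinear f g hf hg, ?_⟩
  funext a
  apply Hand.val_injective
  show ((chiCochain e (cup f g) - cup (chiCochain e f) (chiCochain e g)) a).val
      = (hd (homotopyAux e f g) a).val
  rw [D_val f g a, main_identity f g hdf hdg a]

lemma cup_chi_zero_left (n : ℕ) (f : (Fin 0 → C) → C) (g : (Fin n → C) → C)
    (hdf : hd f = 0) :
    chiCochain e (cup f g) - cup (chiCochain e f) (chiCochain e g) = 0 := by
  funext a
  apply Hand.val_injective
  show e * (f (fun i => (a (Fin.castAdd n i)).val) * g (fun j => (a (Fin.natAdd 0 j)).val)) * e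
      - (e * f (fun i => (a (Fin.castAdd n i)).val) * e)
        * (e * g (fun j => (a (Fin.natAdd 0 j)).val) * e) = 0
  set b := (fun i => (a (Fin.castAdd n i)).val) with hb
  set Y := g (fun j => (a (Fin.natAdd 0 j)).val) with hY
  have hc := central_of_cocycle f hdf
  have h1 : e * (f b * Y) * e = f b * (e * Y * e) := by
    rw [← mul_assoc e (f b) Y, hc e b, mul_assoc (f b) e Y, mul_assoc (f b) (e * Y) e]
  have h2 : e * f b * e * (e * Y * e) = f b * (e * Y * e) := by
    rw [hc e b, mul_assoc (f b) e e, ee, mul_assoc (f b) e (e * Y * e),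
      show e * (e * Y * e) = e * Y * e from by rw [← mul_assoc, ← mul_assoc e e Y, ee]]
  rw [h1, h2, sub_self]

lemma cup_chi_zero_right (m : ℕ) (f : (Fin m → C) → C) (g : (Fin 0 → C) → C)
    (hdg : hd g = 0) :
    chiCochain e (cup f g) - cup (chiCochain e f) (chiCochain e g) = 0 := by
  funext a
  apply Hand.val_injective
  show e * (f (fun i => (a (Fin.castAdd 0 i)).val) * g (fun j => (a (Fin.natAdd m j)).val)) * e
      - (e * f (fun i => (a (Fin.castAdd 0 i)).val) * e)
        * (e * g (fun j => (a (Fin.natAdd m j)).val) * e) = 0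
  set b := (fun j => (a (Fin.natAdd m j)).val) with hb
  set X := f (fun i => (a (Fin.castAdd 0 i)).val) with hX
  have hc := central_of_cocycle g hdg
  have h1 : e * (X * g b) * e = (e * X * e) * g b := by
    rw [← mul_assoc e X (g b), mul_assoc (e * X) (g b) e, ← hc e b,
      ← mul_assoc (e * X) e (g b)]
  have h2 : (e * X * e) * (e * g b * e) = (e * X * e) * g b := by
    rw [hc e b, mul_assoc (g b) e e, ee, ← hc e b, ← mul_assoc (e * X * e) e (g b),
      mul_assoc (e * X) e e, ee]
  rw [h1, h2, sub_self]

end Helpers10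

/-- For a Morita context `(C, e)` over a commutative ring `K`, with
`A = eCe`, the comparison map `χ_{C/A} : Hoch(C) → Hoch(A)` on Hochschild cochains
(restriction of arguments to `A` together with compression `e·(-)·e` of values, which is
the cochain-level form of the map induced by `Ce ⊗_A 𝔹(A) ⊗_A eC ↪ 𝔹(C)`) is a
homomorphism of graded `K`-algebras: it is a `K`-linear chain map, preserves
multilinearity, sends the unit cocycle to the unit cocycle, and is multiplicative with
respect to the Gerstenhaber (cup/Yoneda) product, up to coboundaries. -/
theorem comparison_map_is_graded_algebra_homomorphism
    (K : Type) [CommRing K] (C : Type) [Ring C] [Algebra K C]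
    (e : C) [Fact (IsIdempotentElem e)] :
    -- χ preserves multilinear cochains
    (∀ (n : ℕ) (f : (Fin n → C) → C), IsMultilinearCochain K f →
        IsMultilinearCochain K (chiCochain e f))
    -- χ is a map of complexes
    ∧ (∀ (n : ℕ) (f : (Fin n → C) → C), IsMultilinearCochain K f →
        chiCochain e (hd f) = hd (chiCochain e f))
    -- χ is additive and K-linear
    ∧ (∀ (n : ℕ) (f g : (Fin n → C) → C),
        chiCochain e (f + g) = chiCochain e f + chiCochain e g)
    ∧ (∀ (n : ℕ) (k : K) (f : (Fin n → C) → C),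
        chiCochain e (k • f) = k • chiCochain e f)
    -- χ sends the unit of `Hoch^0(C)` to the unit of `Hoch^0(A)`
    ∧ (chiCochain e (fun _ : Fin 0 → C => (1 : C)) = fun _ => (1 : Hand e e))
    -- on cocycles, χ is multiplicative up to coboundaries
    ∧ (∀ (m n : ℕ) (f : (Fin m → C) → C) (g : (Fin n → C) → C),
        IsMultilinearCochain K f → IsMultilinearCochain K g →
        hd f = 0 → hd g = 0 →
        IsCoboundary K
          (chiCochain e (cup f g) - cup (chiCochain e f) (chiCochain e g))) := by
  refine ⟨fun n f hf => chi_multilinear f hf,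
    fun n f hf => chi_chain' f,
    fun n f g => chi_add f g,
    fun n k f => chi_smulK k f,
    chi_one, ?_⟩
  intro m n f g hf hg hdf hdg
  rcases n with _ | n'
  · rcases m with _ | m''
    · exact cup_chi_zero_right 0 f g hdg
    · exact ⟨0, multilinear_zero, by rw [hd_zero]; exact cup_chi_zero_right (m''+1) f g hdg⟩
  · rcases m with _ | m'
    · exact ⟨0, multilinear_zero, by rw [hd_zero]; exact cup_chi_zero_left (n'+1) f g hdf⟩
    · exact main_case f g hf hg hdf hdg

end MoritaHochschild
end
end
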